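/- arXiv:1907.13493 — 3 statements merged into one kernel-verified Lean document; each statement's English description precedes it below -/
import Mathlib

section
/- For every integer d ≥ 1 there exists a constant c_d > 0 depending only on d such that for every integer t ≥ 1, every triangular complex spherical t-design z_1, …, z_N on Ω^d satisfies N ≥ c_d · t^{2d−1}; that is, the order t^{2d−1} in the existence theorem is optimal. -/
noncomputable section
open MeasureTheory Metric MvPolynomial ENNReal

instance (d : ℕ) : MeasurableSpace (EuclideanSpace ℂ (Fin d)) := borel _
instance (d : ℕ) : BorelSpace (EuclideanSpace ℂ (Fin d)) := ⟨rfl⟩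

/-- The complex unit sphere `Ω^d ⊆ ℂ^d`. -/
abbrev CSph (d : ℕ) : Type := Metric.sphere (0 : EuclideanSpace ℂ (Fin d)) 1

def csMap {d : ℕ} (f : EuclideanSpace ℂ (Fin d) ≃ₗᵢ[ℂ] EuclideanSpace ℂ (Fin d))
    (z : CSph d) : CSph d :=
  ⟨f z, by
    have hz := z.2
    simp only [mem_sphere_iff_norm, sub_zero] at hz ⊢
    simp [hz]⟩

/-- `μ` is the uniform (unitarily invariant) probability measure on `Ω^d`. -/
def IsUniformC {d : ℕ} (μ : Measure (CSph d)) : Prop :=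
  IsProbabilityMeasure μ ∧
    ∀ f : EuclideanSpace ℂ (Fin d) ≃ₗᵢ[ℂ] EuclideanSpace ℂ (Fin d),
      Measure.map (csMap f) μ = μ

/-- Evaluation of `Q ∈ ℂ[u₁,…,u_d,v₁,…,v_d]` at `u_j = z_j`, `v_j = conj (z_j)`. -/
def evalC {d : ℕ} (Q : MvPolynomial (Fin d ⊕ Fin d) ℂ) (z : CSph d) : ℂ :=
  MvPolynomial.eval
    (Sum.elim (fun j => (z : EuclideanSpace ℂ (Fin d)) j)
      (fun j => (starRingEnd ℂ) ((z : EuclideanSpace ℂ (Fin d)) j))) Q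

/-- A finite family of points of `Ω^d` is a triangular complex spherical `t`-design. -/
def IsTriDesign {d : ℕ} (μ : Measure (CSph d)) (t : ℕ)
    {ι : Type} [Fintype ι] (z : ι → CSph d) : Prop :=
  ∀ Q : MvPolynomial (Fin d ⊕ Fin d) ℂ, Q.totalDegree ≤ t →
    (Fintype.card ι : ℂ)⁻¹ * ∑ i, evalC Q (z i) = ∫ w, evalC Q w ∂μ

/-! ### Auxiliary algebraic lemmas -/

section AuxAlgebra
open Complex

/-- vanishing on a product of infinite sets implies zero -/
lemma TDaux.mv_zero_of_vanish : ∀ (n : ℕ) (P : MvPolynomial (Fin n) ℂ) (S : Fin n → Set ℂ),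
    (∀ i, (S i).Infinite) → (∀ x : Fin n → ℂ, (∀ i, x i ∈ S i) → eval x P = 0) → P = 0 := by
  intro n
  induction n with
  | zero =>
    intro P S hS h
    have h0 := h (fun i => i.elim0) (fun i => i.elim0)
    have hP := MvPolynomial.eq_C_of_isEmpty P
    rw [hP] at h0 ⊢
    rw [eval_C] at h0
    rw [h0, map_zero]
  | succ n ih =>
    intro P S hS h
    set q := MvPolynomial.finSuccEquiv ℂ n P with hq
    have key : ∀ x : Fin n → ℂ, (∀ i, x i ∈ S i.succ) →
        Polynomial.map (eval x) q = 0 := by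
      intro x hx
      apply Polynomial.eq_zero_of_infinite_isRoot
      refine (hS 0).mono ?_
      intro y hy
      · have := h (Fin.cons y x) (by
          intro i
          refine Fin.cases ?_ ?_ i
          · simpa using hy
          · intro j; simpa using hx j)
        rw [MvPolynomial.eval_eq_eval_mv_eval'] at this
        exact this
    have hcoeff : ∀ k, q.coeff k = 0 := by
      intro k
      apply ih _ (fun i => S i.succ) (fun i => hS i.succ)
      intro x hx
      have := key x hx
      have := congrArg (fun p => Polynomial.coeff p k) this
      simpa using this
    have : q = 0 := Polynomial.ext (fun k => by simp [hcoeff])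
    have h2 := congrArg (MvPolynomial.finSuccEquiv ℂ n).symm this
    simpa [hq] using h2

/-- eval of an aeval-composite -/
lemma TDaux.eval_aeval {σ τ : Type} (g : σ → MvPolynomial τ ℂ) (f : τ → ℂ) (P : MvPolynomial σ ℂ) :
    eval f (aeval g P) = eval (fun i => eval f (g i)) P := by
  rw [aeval_def, eval₂_comp_left (eval f)]
  congr 1
  · ext r : 1; simp

def TDaux.Tmap (m : ℕ) : MvPolynomial (Fin m ⊕ Fin m) ℂ →ₐ[ℂ] MvPolynomial (Fin m ⊕ Fin m) ℂ :=
  aeval (Sum.elim (fun j => X (Sum.inl j) + C I * X (Sum.inr j))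
    (fun j => X (Sum.inl j) - C I * X (Sum.inr j)))

lemma TDaux.Tmap_inj (m : ℕ) : Function.Injective (TDaux.Tmap m) := by
  set T' : MvPolynomial (Fin m ⊕ Fin m) ℂ →ₐ[ℂ] MvPolynomial (Fin m ⊕ Fin m) ℂ :=
    aeval (Sum.elim (fun j => C (1/2 : ℂ) * (X (Sum.inl j) + X (Sum.inr j)))
      (fun j => C (-I/2) * (X (Sum.inl j) - X (Sum.inr j)))) with hT'
  have key : T'.comp (TDaux.Tmap m) = AlgHom.id ℂ _ := by
    apply MvPolynomial.algHom_ext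
    intro i
    rcases i with j | j <;>
      · simp only [AlgHom.comp_apply, TDaux.Tmap, hT', aeval_X, Sum.elim_inl, Sum.elim_inr,
          map_add, map_sub, map_mul, aeval_C, AlgHom.id_apply]
        apply MvPolynomial.funext
        intro x
        simp only [map_add, map_sub, map_mul, eval_X, eval_C, algebraMap_eq]
        first
          | linear_combination (-(x (Sum.inl j) - x (Sum.inr j))/2) * Complex.I_mul_I
          | linear_combination ((x (Sum.inl j) - x (Sum.inr j))/2) * Complex.I_mul_I
  intro a b hab
  have := congrArg T' hab
  have h1 := congrFun (congrArg (fun (F : _ →ₐ[ℂ] _) => (F : _ → _)) key)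
  simpa using (h1 a).symm.trans (this.trans (h1 b))

lemma TDaux.eval_Tmap {m : ℕ} (x y : Fin m → ℝ) (Q : MvPolynomial (Fin m ⊕ Fin m) ℂ) :
    eval (Sum.elim (fun j => (x j : ℂ)) (fun j => (y j : ℂ))) (TDaux.Tmap m Q)
      = eval (Sum.elim (fun j => (x j : ℂ) + (y j : ℂ) * I)
          (fun j => (starRingEnd ℂ) ((x j : ℂ) + (y j : ℂ) * I))) Q := by
  rw [TDaux.Tmap, TDaux.eval_aeval]
  have : (fun i => eval (Sum.elim (fun j => (x j : ℂ)) (fun j => (y j : ℂ)))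
        ((Sum.elim (fun j => X (Sum.inl j) + C I * X (Sum.inr j))
          (fun j => X (Sum.inl j) - C I * X (Sum.inr j))) i))
      = Sum.elim (fun j => (x j : ℂ) + (y j : ℂ) * I)
          (fun j => (starRingEnd ℂ) ((x j : ℂ) + (y j : ℂ) * I)) := by
    funext i
    rcases i with j | j <;> simp [Complex.ext_iff]
  rw [this]

lemma TDaux.vanish_polydisc {m : ℕ} (Q : MvPolynomial (Fin m ⊕ Fin m) ℂ) (ε : ℝ) (hε : 0 < ε)
    (h : ∀ z : Fin m → ℂ, (∀ j, ‖z j‖ < ε) →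
      (eval (Sum.elim z (fun j => (starRingEnd ℂ) (z j))) Q) = 0) : Q = 0 := by
  have hR : rename (finSumFinEquiv (m := m) (n := m)) (TDaux.Tmap m Q) = 0 := by
    apply TDaux.mv_zero_of_vanish _ _ (fun _ => (fun t : ℝ => (t : ℂ)) '' Set.Ioo (-(ε/2)) (ε/2))
    · intro i
      exact (Set.Ioo_infinite (by linarith)).image Complex.ofReal_injective.injOn
    · intro x hx
      have hre : ∀ i, ((x i).re : ℂ) = x i ∧ |(x i).re| < ε/2 := by
        intro i
        obtain ⟨t, ht, hxt⟩ := hx i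
        rw [← hxt]
        refine ⟨by simp, ?_⟩
        rw [Complex.ofReal_re]
        exact abs_lt.2 ⟨by simpa using ht.1, ht.2⟩
      rw [eval_rename]
      set X : Fin m → ℝ := fun j => (x (finSumFinEquiv (Sum.inl j))).re with hX
      set Y : Fin m → ℝ := fun j => (x (finSumFinEquiv (Sum.inr j))).re with hY
      have hcomp : (x ∘ finSumFinEquiv) = Sum.elim (fun j => (X j : ℂ)) (fun j => (Y j : ℂ)) := by
        funext i
        rcases i with j | j <;> simp [hX, hY, (hre _).1]
      rw [hcomp, TDaux.eval_Tmap]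
      apply h
      intro j
      calc ‖(X j : ℂ) + (Y j : ℂ) * I‖
          ≤ ‖(X j : ℂ)‖ + ‖(Y j : ℂ) * I‖ := norm_add_le _ _
        _ = |X j| + |Y j| := by simp [map_mul]
        _ < ε/2 + ε/2 := add_lt_add (hre _).2 (hre _).2
        _ = ε := by ring
  have : TDaux.Tmap m Q = 0 := by
    have hinj := MvPolynomial.rename_injective (R := ℂ)
      (finSumFinEquiv (m := m) (n := m) : Fin m ⊕ Fin m → Fin (m + m))
      (finSumFinEquiv.injective)
    apply hinj
    simpa using hR
  exact TDaux.Tmap_inj m (by simpa using this)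

lemma TDaux.eval_congr_of_unused {σ : Type} [Fintype σ] [DecidableEq σ] (P : MvPolynomial σ ℂ)
    (i0 : σ) (hsupp : ∀ m ∈ P.support, m i0 = 0) (f g : σ → ℂ)
    (hfg : ∀ i, i ≠ i0 → f i = g i) : eval f P = eval g P := by
  rw [eval_eq', eval_eq']
  apply Finset.sum_congr rfl
  intro m hm
  congr 1
  apply Finset.prod_congr rfl
  intro i _
  by_cases hi : i = i0
  · subst hi; rw [hsupp m hm, pow_zero, pow_zero]
  · rw [hfg i hi]

lemma TDaux.circle_infinite (r : ℝ) (hr : 0 < r) : {w : ℂ | ‖w‖ = r}.Infinite := by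
  have hmaps : ∀ t ∈ Set.Ioo (-r) r,
      ‖(t : ℂ) + (Real.sqrt (r^2 - t^2) : ℝ) * I‖ = r := by
    intro t ht
    have h1 : t^2 ≤ r^2 := by nlinarith [ht.1, ht.2]
    rw [Complex.norm_def, Complex.normSq_add_mul_I, Real.sq_sqrt (by linarith)]
    rw [show t^2 + (r^2 - t^2) = r^2 by ring]
    exact Real.sqrt_sq hr.le
  have hinj : Set.InjOn (fun t : ℝ => (t : ℂ) + (Real.sqrt (r^2 - t^2) : ℝ) * I)
      (Set.Ioo (-r) r) := by
    intro a _ b _ hab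
    have := congrArg Complex.re hab
    simpa using this
  refine ((Set.Ioo_infinite (by linarith)).image hinj).mono ?_
  rintro w ⟨t, ht, rfl⟩
  exact hmaps t ht

/-- The key independence lemma: a polynomial with no `v₀` variable which vanishes
on the unit sphere is zero. -/
lemma TDaux.indep_lemma (e : ℕ) (P : MvPolynomial (Fin (e+1) ⊕ Fin (e+1)) ℂ)
    (hsupp : ∀ m ∈ P.support, m (Sum.inr 0) = 0)
    (hvan : ∀ z : Fin (e+1) → ℂ, (∑ j, Complex.normSq (z j)) = 1 →
      (eval (Sum.elim z (fun j => (starRingEnd ℂ) (z j))) P) = 0) : P = 0 := by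
  classical
  set g : Fin (e+1) ⊕ Fin (e+1) → Polynomial (MvPolynomial (Fin e ⊕ Fin e) ℂ) :=
    Sum.elim (Fin.cases Polynomial.X (fun j => Polynomial.C (X (Sum.inl j))))
      (Fin.cases 0 (fun j => Polynomial.C (X (Sum.inr j)))) with hg
  set Ψ : MvPolynomial (Fin (e+1) ⊕ Fin (e+1)) ℂ →ₐ[ℂ]
      Polynomial (MvPolynomial (Fin e ⊕ Fin e) ℂ) := aeval g with hΨ
  have stepA : ∀ (z' : Fin e → ℂ) (w : ℂ),
      Polynomial.eval w (Polynomial.map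
          (eval (Sum.elim z' (fun j => (starRingEnd ℂ) (z' j)))) (Ψ P))
        = eval (Sum.elim (Fin.cons w z')
            (Fin.cons 0 (fun j => (starRingEnd ℂ) (z' j)))) P := by
    intro z' w
    have hhom : ((Polynomial.evalRingHom w).comp
        ((Polynomial.mapRingHom (eval (Sum.elim z' (fun j => (starRingEnd ℂ) (z' j))))).comp
          Ψ.toRingHom))
        = (eval (Sum.elim (Fin.cons w z') (Fin.cons 0 (fun j => (starRingEnd ℂ) (z' j))))
            : MvPolynomial (Fin (e+1) ⊕ Fin (e+1)) ℂ →+* ℂ) := by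
      apply MvPolynomial.ringHom_ext
      · intro a
        simp [hΨ]
      · intro i
        rcases i with j | j <;>
          induction j using Fin.cases <;>
            simp [hΨ, hg]
    exact RingHom.congr_fun hhom P
  have hΨP : Ψ P = 0 := by
    have hcoeff : ∀ k, (Ψ P).coeff k = 0 := by
      intro k
      apply TDaux.vanish_polydisc _ ((1:ℝ)/(e+1)) (by positivity)
      intro z' hz'
      have hsum : (∑ j, Complex.normSq (z' j)) < 1 := by
        have hbound : ∀ j, Complex.normSq (z' j) < ((1:ℝ)/(e+1))^2 := by
          intro j
          rw [← Complex.sq_norm]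
          have h0 := norm_nonneg (z' j)
          nlinarith [hz' j]
        have hepos : (0:ℝ) < ((e:ℝ)+1)^2 := by positivity
        calc (∑ j, Complex.normSq (z' j)) ≤ ∑ _j : Fin e, ((1:ℝ)/(e+1))^2 :=
              Finset.sum_le_sum (fun j _ => (hbound j).le)
          _ = (e:ℝ) * ((1:ℝ)/(e+1))^2 := by
              rw [Finset.sum_const, Finset.card_univ, Fintype.card_fin, nsmul_eq_mul]
          _ < 1 := by
              rw [div_pow, one_pow, mul_one_div, div_lt_one hepos]
              nlinarith
      set r : ℝ := Real.sqrt (1 - ∑ j, Complex.normSq (z' j)) with hr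
      have hrpos : 0 < r := Real.sqrt_pos.2 (by linarith)
      have hmap0 : Polynomial.map
          (eval (Sum.elim z' (fun j => (starRingEnd ℂ) (z' j)))) (Ψ P) = 0 := by
        apply Polynomial.eq_zero_of_infinite_isRoot
        refine (TDaux.circle_infinite r hrpos).mono ?_
        intro w hw
        have hsph : (∑ j, Complex.normSq ((Fin.cons w z' : Fin (e+1) → ℂ) j)) = 1 := by
          rw [Fin.sum_univ_succ]
          simp only [Fin.cons_zero, Fin.cons_succ]
          have : Complex.normSq w = r^2 := by rw [← Complex.sq_norm, hw]
          rw [this, hr, Real.sq_sqrt (by linarith)]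
          ring
        have h0 := hvan _ hsph
        have hconj : (fun j => (starRingEnd ℂ) ((Fin.cons w z' : Fin (e+1) → ℂ) j))
            = Fin.cons ((starRingEnd ℂ) w) (fun j => (starRingEnd ℂ) (z' j)) := by
          funext j
          induction j using Fin.cases <;> simp
        rw [hconj] at h0
        have := TDaux.eval_congr_of_unused P (Sum.inr 0) hsupp
          (Sum.elim (Fin.cons w z')
            (Fin.cons ((starRingEnd ℂ) w) (fun j => (starRingEnd ℂ) (z' j))))
          (Sum.elim (Fin.cons w z') (Fin.cons 0 (fun j => (starRingEnd ℂ) (z' j))))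
          (by
            intro i hi
            rcases i with j | j
            · rfl
            · induction j using Fin.cases with
              | zero => exact absurd rfl hi
              | succ j' => simp)
        show Polynomial.IsRoot _ w
        unfold Polynomial.IsRoot
        rw [stepA z' w, ← this, h0]
      have := congrArg (fun p => Polynomial.coeff p k) hmap0
      simpa [Polynomial.coeff_map] using this
    exact Polynomial.ext (fun k => by simp [hcoeff])
  set h : Fin (e+1) ⊕ Fin (e+1) → MvPolynomial (Fin (e+1) ⊕ Fin (e+1)) ℂ :=
    fun i => if i = Sum.inr 0 then 0 else X i with hh
  set Ψ' : Polynomial (MvPolynomial (Fin e ⊕ Fin e) ℂ) →+*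
      MvPolynomial (Fin (e+1) ⊕ Fin (e+1)) ℂ :=
    Polynomial.eval₂RingHom
      (MvPolynomial.rename (Sum.map Fin.succ Fin.succ)).toRingHom (X (Sum.inl 0)) with hΨ'
  have key2 : Ψ'.comp Ψ.toRingHom = (aeval h).toRingHom := by
    apply MvPolynomial.ringHom_ext
    · intro a
      simp [hΨ, hΨ', algebraMap_eq]
    · intro i
      rcases i with j | j <;>
        induction j using Fin.cases <;>
          simp [hΨ, hΨ', hg, hh, rename_X, Fin.succ_ne_zero]
  have hrecov : aeval h P = P := by
    conv_lhs => rw [P.as_sum]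
    rw [map_sum]
    conv_rhs => rw [P.as_sum]
    apply Finset.sum_congr rfl
    intro m hm
    rw [monomial_eq, map_mul]
    have h1 : aeval h (C (coeff m P) : MvPolynomial (Fin (e+1) ⊕ Fin (e+1)) ℂ)
        = C (coeff m P) := by simp [algebraMap_eq]
    rw [h1, Finsupp.prod, map_prod]
    congr 1
    apply Finset.prod_congr rfl
    intro n hn
    have hn0 : n ≠ Sum.inr 0 := by
      intro hne
      rw [hne] at hn
      rw [Finsupp.mem_support_iff] at hn
      exact hn (hsupp m hm)
    rw [map_pow, aeval_X, hh]
    simp [hn0]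
  have h3 : Ψ' (Ψ P) = aeval h P := RingHom.congr_fun key2 P
  rw [← hrecov, ← h3, hΨP, map_zero]

end AuxAlgebra

/-! ### Geometric / measure-theoretic lemmas -/

lemma TDaux.exists_unitary (e : ℕ) (x y : CSph (e+1)) :
    ∃ f : EuclideanSpace ℂ (Fin (e+1)) ≃ₗᵢ[ℂ] EuclideanSpace ℂ (Fin (e+1)),
      csMap f x = y := by
  have hcard : Module.finrank ℂ (EuclideanSpace ℂ (Fin (e+1))) = Fintype.card (Fin (e+1)) := by
    simp [finrank_euclideanSpace_fin]
  have hon : ∀ u : CSph (e+1),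
      Orthonormal ℂ (({0} : Set (Fin (e+1))).restrict
        (fun _ => (u : EuclideanSpace ℂ (Fin (e+1))))) := by
    intro u
    constructor
    · intro i
      exact norm_eq_of_mem_sphere u
    · intro i j hij
      exact absurd (Subtype.ext (by
        have hi := i.2; have hj := j.2
        simp only [Set.mem_singleton_iff] at hi hj
        rw [hi, hj])) hij
  obtain ⟨b1, hb1⟩ := (hon x).exists_orthonormalBasis_extension_of_card_eq hcard
  obtain ⟨b2, hb2⟩ := (hon y).exists_orthonormalBasis_extension_of_card_eq hcard
  refine ⟨b1.repr.trans b2.repr.symm, ?_⟩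
  apply Subtype.ext
  show (b1.repr.trans b2.repr.symm) (x : EuclideanSpace ℂ (Fin (e+1))) = y
  rw [← hb1 0 rfl, ← hb2 0 rfl]
  simp [OrthonormalBasis.repr_self]

def TDaux.csHomeo {d : ℕ} (f : EuclideanSpace ℂ (Fin d) ≃ₗᵢ[ℂ] EuclideanSpace ℂ (Fin d)) :
    CSph d ≃ₜ CSph d where
  toFun := csMap f
  invFun := csMap f.symm
  left_inv := fun z => Subtype.ext (by simp [csMap])
  right_inv := fun z => Subtype.ext (by simp [csMap])
  continuous_toFun := Continuous.subtype_mk (f.continuous.comp continuous_subtype_val) _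
  continuous_invFun := Continuous.subtype_mk (f.symm.continuous.comp continuous_subtype_val) _

lemma TDaux.open_pos (e : ℕ) (μ : Measure (CSph (e+1))) (hμ : IsUniformC μ)
    {U : Set (CSph (e+1))} (hU : IsOpen U) (hne : U.Nonempty) : μ U ≠ 0 := by
  have : IsProbabilityMeasure μ := hμ.1
  intro h0
  obtain ⟨w0, hw0⟩ := hne
  have key : ∀ w : CSph (e+1), ∃ V : Set (CSph (e+1)), IsOpen V ∧ w ∈ V ∧ μ V = 0 := by
    intro w
    obtain ⟨f, hf⟩ := TDaux.exists_unitary e w0 w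
    refine ⟨(TDaux.csHomeo f) '' U, (TDaux.csHomeo f).isOpenMap U hU, ⟨w0, hw0, hf⟩, ?_⟩
    have hmeas : MeasurableSet ((TDaux.csHomeo f) '' U) :=
      ((TDaux.csHomeo f).isOpenMap U hU).measurableSet
    have hmapeq := hμ.2 f
    have hc : Measurable (csMap f) := (TDaux.csHomeo f).continuous.measurable
    have : μ ((TDaux.csHomeo f) '' U) = μ (csMap f ⁻¹' ((TDaux.csHomeo f) '' U)) := by
      conv_lhs => rw [← hmapeq]
      rw [Measure.map_apply hc hmeas]
    rw [this]
    have hpre : csMap f ⁻¹' ((TDaux.csHomeo f) '' U) = U := by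
      apply Set.preimage_image_eq
      exact (TDaux.csHomeo f).injective
    rw [hpre, h0]
  choose V hVopen hVmem hVzero using key
  have hcover : (Set.univ : Set (CSph (e+1))) ⊆ ⋃ w, V w :=
    fun w _ => Set.mem_iUnion.2 ⟨w, hVmem w⟩
  obtain ⟨T, hT⟩ := isCompact_univ.elim_finite_subcover V hVopen hcover
  have : μ Set.univ ≤ ∑ w ∈ T, μ (V w) :=
    le_trans (measure_mono hT) (measure_biUnion_finset_le T V)
  rw [measure_univ] at this
  simp [hVzero] at this

lemma TDaux.continuous_evalC {d : ℕ} (Q : MvPolynomial (Fin d ⊕ Fin d) ℂ) :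
    Continuous (evalC Q) := by
  have hcoord : ∀ j : Fin d, Continuous (fun z : CSph d => (z : EuclideanSpace ℂ (Fin d)) j) := by
    intro j
    exact (EuclideanSpace.proj (𝕜 := ℂ) j).continuous.comp continuous_subtype_val
  induction Q using MvPolynomial.induction_on with
  | C a =>
    have : evalC (C a : MvPolynomial (Fin d ⊕ Fin d) ℂ) = fun _ => a := by
      funext z; simp [evalC]
    rw [this]; exact continuous_const
  | add p q hp hq =>
    have : evalC (p + q) = fun z => evalC p z + evalC q z := by
      funext z; simp [evalC]
    rw [this]; exact hp.add hq
  | mul_X p i hp =>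
    have : evalC (p * X i) = fun z => evalC p z * evalC (X i) z := by
      funext z; simp [evalC]
    rw [this]
    apply hp.mul
    rcases i with j | j
    · have : evalC (X (Sum.inl j) : MvPolynomial (Fin d ⊕ Fin d) ℂ)
          = fun z : CSph d => (z : EuclideanSpace ℂ (Fin d)) j := by
        funext z; simp [evalC]
      rw [this]; exact hcoord j
    · have : evalC (X (Sum.inr j) : MvPolynomial (Fin d ⊕ Fin d) ℂ)
          = fun z : CSph d => (starRingEnd ℂ) ((z : EuclideanSpace ℂ (Fin d)) j) := by
        funext z; simp [evalC]
      rw [this]; exact Complex.continuous_conj.comp (hcoord j)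

def TDaux.conjSwap {d : ℕ} (P : MvPolynomial (Fin d ⊕ Fin d) ℂ) :
    MvPolynomial (Fin d ⊕ Fin d) ℂ :=
  rename (Sum.swap) (MvPolynomial.map (starRingEnd ℂ) P)

lemma TDaux.evalC_conjSwap {d : ℕ} (P : MvPolynomial (Fin d ⊕ Fin d) ℂ) (z : CSph d) :
    evalC (TDaux.conjSwap P) z = (starRingEnd ℂ) (evalC P z) := by
  unfold evalC TDaux.conjSwap
  rw [eval_rename, eval_map]
  rw [show (MvPolynomial.eval (Sum.elim (fun j => (z : EuclideanSpace ℂ (Fin d)) j)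
      (fun j => (starRingEnd ℂ) ((z : EuclideanSpace ℂ (Fin d)) j))) P)
    = eval₂ (RingHom.id ℂ) (Sum.elim (fun j => (z : EuclideanSpace ℂ (Fin d)) j)
      (fun j => (starRingEnd ℂ) ((z : EuclideanSpace ℂ (Fin d)) j))) P from rfl]
  rw [eval₂_comp_left (starRingEnd ℂ)]
  simp only [RingHom.comp_id]
  congr 1
  funext i
  rcases i with j | j <;> simp

lemma TDaux.totalDegree_conjSwap_le {d : ℕ} (P : MvPolynomial (Fin d ⊕ Fin d) ℂ) :
    (TDaux.conjSwap P).totalDegree ≤ P.totalDegree := by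
  refine le_trans (totalDegree_rename_le _ _) ?_
  exact Finset.sup_mono (support_map_subset _ _)

/-- the order `t^{2d-1}` is optimal: every triangular complex spherical
`t`-design has at least `c_d t^{2d-1}` points. -/
theorem triangular_design_lower_bound (d : ℕ) (hd : 1 ≤ d) :
    ∃ c : ℝ, 0 < c ∧ ∀ t : ℕ, 1 ≤ t → ∀ N : ℕ, ∀ z : Fin N → CSph d,
      ∀ μ : Measure (CSph d), IsUniformC μ → IsTriDesign μ t z →
        c * (t : ℝ) ^ (2 * d - 1) ≤ (N : ℝ) := by
  classical
  obtain ⟨e, rfl⟩ : ∃ e, d = e + 1 := ⟨d - 1, by omega⟩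
  set p := 2 * (e + 1) - 1 with hp
  have hp0 : 0 < p := by omega
  refine ⟨((2 * p : ℝ))⁻¹ ^ p, by positivity, ?_⟩
  intro t ht N z μ hμ hdes
  haveI : IsProbabilityMeasure μ := hμ.1
  -- N ≠ 0
  have hN0 : N ≠ 0 := by
    intro h0
    have h1 := hdes 1 (by simp)
    have he1 : evalC (1 : MvPolynomial (Fin (e+1) ⊕ Fin (e+1)) ℂ) = fun _ => 1 :=
      funext fun w => by simp [evalC]
    rw [he1] at h1
    subst h0
    rw [integral_const] at h1
    simp [measure_univ] at h1
  -- the monomial family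
  set s := t / 2 with hs
  set k := s / p with hk
  set M : ((Fin (e+1) ⊕ Fin e) → Fin (k+1)) → ((Fin (e+1) ⊕ Fin (e+1)) →₀ ℕ) :=
    fun q => Finsupp.equivFunOnFinite.symm
      (Sum.elim (fun j => (q (Sum.inl j) : ℕ))
        (Fin.cases 0 (fun j' => (q (Sum.inr j') : ℕ)))) with hM
  have hMapp : ∀ q i, M q i = (Sum.elim (fun j => (q (Sum.inl j) : ℕ))
      (Fin.cases 0 (fun j' => (q (Sum.inr j') : ℕ)))) i := by
    intro q i
    simp [hM]
  have hMinr0 : ∀ q, M q (Sum.inr 0) = 0 := by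
    intro q
    rw [hMapp]
    simp
  have hMinj : Function.Injective M := by
    intro q q' hqq
    funext i
    rcases i with j | j
    · have := DFunLike.congr_fun hqq (Sum.inl j)
      rw [hMapp, hMapp] at this
      simp only [Sum.elim_inl] at this
      exact Fin.ext (by exact_mod_cast this)
    · have := DFunLike.congr_fun hqq (Sum.inr j.succ)
      rw [hMapp, hMapp] at this
      simp only [Sum.elim_inr, Fin.cases_succ] at this
      exact Fin.ext (by exact_mod_cast this)
  have hMdeg : ∀ q, ((M q).sum fun _ n => n) ≤ s := by
    intro q
    rw [Finsupp.sum_fintype _ _ (fun _ => rfl)]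
    have hval : ∀ i, M q i ≤ k := by
      intro i
      rw [hMapp]
      rcases i with j | j
      · exact Nat.lt_succ_iff.1 (q (Sum.inl j)).2
      · induction j using Fin.cases with
        | zero => simp
        | succ j' =>
          simp only [Sum.elim_inr, Fin.cases_succ]
          exact Nat.lt_succ_iff.1 (q (Sum.inr j')).2
    calc (∑ i, M q i)
        = (∑ j : Fin (e+1), M q (Sum.inl j)) + (∑ j : Fin (e+1), M q (Sum.inr j)) := by
          rw [Fintype.sum_sum_type]
      _ ≤ (e+1) * k + ((0 : ℕ) + e * k) := by
          gcongr
          · calc (∑ _j : Fin (e+1), M q (Sum.inl _j)) ≤ ∑ _j : Fin (e+1), k :=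
                Finset.sum_le_sum (fun j _ => hval (Sum.inl j))
              _ = (e+1) * k := by simp [Finset.sum_const, mul_comm]
          · rw [Fin.sum_univ_succ]
            gcongr
            · rw [hMapp]; simp
            · calc (∑ j : Fin e, M q (Sum.inr j.succ)) ≤ ∑ _j : Fin e, k :=
                  Finset.sum_le_sum (fun j _ => hval (Sum.inr j.succ))
                _ = e * k := by simp [Finset.sum_const, mul_comm]
      _ = p * k := by rw [show p = 2*e+1 by omega]; ring
      _ ≤ s := by rw [hk, mul_comm]; exact Nat.div_mul_le_self s p
  -- the polynomial associated to a coefficient vector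
  set Pof : (((Fin (e+1) ⊕ Fin e) → Fin (k+1)) → ℂ) → MvPolynomial (Fin (e+1) ⊕ Fin (e+1)) ℂ :=
    fun c => ∑ q : (Fin (e+1) ⊕ Fin e) → Fin (k+1), c q • monomial (M q) (1:ℂ) with hPof
  have hPofeval : ∀ c (w : CSph (e+1)),
      evalC (Pof c) w = ∑ q, c q * evalC (monomial (M q) (1:ℂ)) w := by
    intro c w
    simp only [evalC, hPof, map_sum]
    apply Finset.sum_congr rfl
    intro q _
    rw [smul_eq_C_mul, map_mul, eval_C]
  have hcoeffPof : ∀ c q, coeff (M q) (Pof c) = c q := by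
    intro c q
    rw [hPof]
    simp only [coeff_sum]
    have hterm : ∀ q', coeff (M q) (c q' • monomial (M q') (1:ℂ))
        = if q' = q then c q' else 0 := by
      intro q'
      by_cases hq : q' = q
      · subst hq; simp [coeff_smul, coeff_monomial]
      · have hne : M q' ≠ M q := fun hEq => hq (hMinj hEq)
        simp [coeff_smul, coeff_monomial, hne, hq]
    rw [Finset.sum_congr rfl (fun q' _ => hterm q')]
    simp
  have hsuppPof : ∀ c m, m ∈ (Pof c).support → ∃ q, M q = m := by
    intro c m hm
    rw [mem_support_iff] at hm
    by_contra hno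
    push_neg at hno
    apply hm
    rw [hPof]
    simp only [coeff_sum]
    apply Finset.sum_eq_zero
    intro q _
    rw [coeff_smul, coeff_monomial, if_neg (hno q), smul_zero]
  have htdPof : ∀ c, (Pof c).totalDegree ≤ s := by
    intro c
    refine le_trans (totalDegree_finset_sum _ _) ?_
    apply Finset.sup_le
    intro q _
    rw [smul_monomial, smul_eq_mul, mul_one]
    by_cases hcq : c q = 0
    · simp [hcq]
    · rw [totalDegree_monomial _ hcq]
      exact hMdeg q
  -- the sampling linear map
  set Φ : (((Fin (e+1) ⊕ Fin e) → Fin (k+1)) → ℂ) →ₗ[ℂ] (Fin N → ℂ) :=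
    { toFun := fun c i => ∑ q, c q * evalC (monomial (M q) (1:ℂ)) (z i)
      map_add' := by
        intro a b; funext i; simp [add_mul, Finset.sum_add_distrib]
      map_smul' := by
        intro r a; funext i; simp [Finset.mul_sum, mul_assoc] } with hΦ
  have hinj : Function.Injective Φ := by
    rw [← LinearMap.ker_eq_bot, LinearMap.ker_eq_bot']
    intro c hc
    have hPz : ∀ i, evalC (Pof c) (z i) = 0 := by
      intro i
      have h := congrFun hc i
      rw [hPofeval c (z i)]
      simpa [hΦ] using h
    have hQdeg : ((Pof c) * TDaux.conjSwap (Pof c)).totalDegree ≤ t := by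
      refine le_trans (totalDegree_mul _ _) ?_
      have h1 := htdPof c
      have h2 := le_trans (TDaux.totalDegree_conjSwap_le (Pof c)) (htdPof c)
      omega
    have hdes' := hdes _ hQdeg
    have hmulC : ∀ w : CSph (e+1), evalC ((Pof c) * TDaux.conjSwap (Pof c)) w
        = evalC (Pof c) w * evalC (TDaux.conjSwap (Pof c)) w := by
      intro w; simp only [evalC, map_mul]
    have hzero : ∀ i, evalC ((Pof c) * TDaux.conjSwap (Pof c)) (z i) = 0 := by
      intro i; rw [hmulC, hPz i, zero_mul]
    rw [Finset.sum_congr rfl (fun i _ => hzero i)] at hdes'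
    simp only [Finset.sum_const_zero, mul_zero] at hdes'
    set gfun : CSph (e+1) → ℝ := fun w => Complex.normSq (evalC (Pof c) w) with hgfun
    have hgeval : ∀ w, evalC ((Pof c) * TDaux.conjSwap (Pof c)) w = ((gfun w : ℝ) : ℂ) := by
      intro w
      rw [hmulC, TDaux.evalC_conjSwap, Complex.mul_conj]
    have hgc : Continuous gfun := Complex.continuous_normSq.comp (TDaux.continuous_evalC _)
    have hgint : Integrable gfun μ :=
      hgc.integrable_of_hasCompactSupport (isClosed_tsupport _).isCompact
    have hint0 : ∫ w, gfun w ∂μ = 0 := by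
      have h2 : (∫ w, ((gfun w : ℝ) : ℂ) ∂μ) = 0 := by
        rw [show (fun w => ((gfun w : ℝ) : ℂ)) = fun w => evalC ((Pof c) * TDaux.conjSwap (Pof c)) w
          from funext fun w => (hgeval w).symm]
        exact hdes'.symm
      have h3 : ((∫ w, gfun w ∂μ : ℝ) : ℂ) = 0 := by
        have h4 : (∫ w, ((gfun w : ℝ) : ℂ) ∂μ) = ((∫ w, gfun w ∂μ : ℝ) : ℂ) := integral_ofReal
        rw [← h4]
        exact h2
      exact_mod_cast h3
    have hae : ∀ᵐ w ∂μ, gfun w = 0 := by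
      have h5 := (integral_eq_zero_iff_of_nonneg (fun w => Complex.normSq_nonneg _) hgint).1 hint0
      filter_upwards [h5] with w hw
      exact hw
    have hallzero : ∀ w, gfun w = 0 := by
      by_contra hcon
      push_neg at hcon
      obtain ⟨w1, hw1⟩ := hcon
      have hUopen : IsOpen {w : CSph (e+1) | gfun w ≠ 0} :=
        (isOpen_compl_singleton (x := (0:ℝ))).preimage hgc
      have hμ0 : μ {w : CSph (e+1) | gfun w ≠ 0} = 0 := by
        have h4 := MeasureTheory.ae_iff.1 hae
        simpa using h4
      exact TDaux.open_pos e μ hμ hUopen ⟨w1, hw1⟩ hμ0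
    have hPzero : Pof c = 0 := by
      apply TDaux.indep_lemma e (Pof c)
      · intro m hm
        obtain ⟨q, hq⟩ := hsuppPof c m hm
        rw [← hq]
        exact hMinr0 q
      · intro zv hzv
        have hptnorm : (WithLp.equiv 2 (Fin (e+1) → ℂ)).symm zv ∈
            Metric.sphere (0 : EuclideanSpace ℂ (Fin (e+1))) 1 := by
          rw [mem_sphere_iff_norm, sub_zero, EuclideanSpace.norm_eq]
          have : ∀ i, ‖(WithLp.equiv 2 (Fin (e+1) → ℂ)).symm zv i‖ ^ 2
              = Complex.normSq (zv i) := by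
            intro i
            rw [show (WithLp.equiv 2 (Fin (e+1) → ℂ)).symm zv i = zv i from rfl]
            rw [← Complex.sq_norm]
          rw [Finset.sum_congr rfl (fun i _ => this i), hzv, Real.sqrt_one]
        set pt : CSph (e+1) := ⟨(WithLp.equiv 2 (Fin (e+1) → ℂ)).symm zv, hptnorm⟩ with hpt2
        have h5 : evalC (Pof c) pt
            = eval (Sum.elim zv (fun j => (starRingEnd ℂ) (zv j))) (Pof c) := rfl
        have h6 := hallzero pt
        rw [hgfun] at h6
        have h7 := Complex.normSq_eq_zero.1 h6
        rw [h5] at h7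
        exact h7
    funext q
    have h8 : c q = coeff (M q) (Pof c) := (hcoeffPof c q).symm
    rw [hPzero] at h8
    simpa using h8
  -- dimension count
  have hcard : Fintype.card ((Fin (e+1) ⊕ Fin e) → Fin (k+1)) ≤ N := by
    have h8 := LinearMap.finrank_le_finrank_of_injective hinj
    rw [Module.finrank_fintype_fun_eq_card, Module.finrank_fintype_fun_eq_card] at h8
    simpa using h8
  have hcardval : Fintype.card ((Fin (e+1) ⊕ Fin e) → Fin (k+1)) = (k+1)^p := by
    rw [Fintype.card_fun]
    simp only [Fintype.card_fin, Fintype.card_sum]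
    rw [show (e+1) + e = p from by omega]
  -- arithmetic
  have h9 : s < (k+1) * p := by
    have h91 : s / p < k + 1 := by rw [← hk]; exact Nat.lt_succ_self k
    exact (Nat.div_lt_iff_lt_mul hp0).1 h91
  have h10 : t ≤ 2 * p * (k+1) := by
    rw [show 2 * p * (k+1) = 2 * ((k+1) * p) from by ring]
    omega
  have hp2 : (0:ℝ) < 2*(p:ℝ) := by positivity
  calc ((2 * p : ℝ))⁻¹ ^ p * (t:ℝ) ^ p
      = ((t:ℝ) / (2*(p:ℝ))) ^ p := by
        rw [div_pow, div_eq_mul_inv, ← inv_pow, mul_comm]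
    _ ≤ ((k:ℝ)+1) ^ p := by
        apply pow_le_pow_left₀ (by positivity)
        rw [div_le_iff₀ hp2]
        calc (t:ℝ) ≤ ((2 * p * (k+1) : ℕ) : ℝ) := by exact_mod_cast h10
          _ = ((k:ℝ)+1) * (2*(p:ℝ)) := by push_cast; ring
    _ = (((k+1)^p : ℕ) : ℝ) := by push_cast; ring
    _ ≤ (N:ℝ) := by
        have := hcardval ▸ hcard
        exact_mod_cast this
end
end

section
/- Let d ≥ 1 and let z_1, …, z_{2d+1} ∈ Ω^d be points satisfying Re⟨z_i, z_j⟩ = −1/(2d) for all i ≠ j (a regular simplex on Ω^d). Then z_1, …, z_{2d+1} form a triangular complex spherical 2-design on Ω^d. -/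
noncomputable section
open MeasureTheory Metric MvPolynomial ENNReal

/-- The Hermitian inner product `⟨u,v⟩ = ∑ u_j conj (v_j)` on `ℂ^d`. -/
def hInnerC {d : ℕ} (u v : EuclideanSpace ℂ (Fin d)) : ℂ :=
  ∑ j, u j * (starRingEnd ℂ) (v j)

/-! ### Auxiliary material -/

open Finset

section Iso

def uIso {d : ℕ} (u : Fin d → ℂ) (hu : ∀ j, ‖u j‖ = 1) (e : Fin d ≃ Fin d) :
    EuclideanSpace ℂ (Fin d) ≃ₗᵢ[ℂ] EuclideanSpace ℂ (Fin d) where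
  toLinearEquiv :=
  { toFun := fun x => WithLp.toLp 2 (fun j => u j * x (e j))
    invFun := fun y => WithLp.toLp 2 (fun j => (u (e.symm j))⁻¹ * y (e.symm j))
    map_add' := by intro x y; ext j; simp [mul_add]
    map_smul' := by intro c x; ext j; simp; ring
    left_inv := by
      intro x; ext j; simp only [PiLp.toLp_apply]
      have h1 : u (e.symm j) ≠ 0 := by
        intro h; have := hu (e.symm j); rw [h] at this; simp at this
      field_simp
      exact congrArg x (e.apply_symm_apply j)
    right_inv := by
      intro y; ext j; simp only [PiLp.toLp_apply]
      have h1 : u j ≠ 0 := by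
        intro h; have := hu j; rw [h] at this; simp at this
      field_simp
      simp only [Equiv.symm_apply_apply]; field_simp }
  norm_map' := by
    intro x
    rw [EuclideanSpace.norm_eq, EuclideanSpace.norm_eq]
    show Real.sqrt (∑ j, ‖u j * x (e j)‖ ^ 2) = _
    congr 1
    have : ∀ j, ‖u j * x (e j)‖ ^ 2 = ‖x (e j)‖ ^ 2 := by
      intro j; rw [norm_mul, hu j, one_mul]
    rw [Finset.sum_congr rfl fun j _ => this j]
    exact Fintype.sum_equiv e _ _ fun j => rfl

@[simp] lemma uIso_apply {d : ℕ} (u : Fin d → ℂ) (hu : ∀ j, ‖u j‖ = 1) (e : Fin d ≃ Fin d)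
    (x : EuclideanSpace ℂ (Fin d)) (j : Fin d) : uIso u hu e x j = u j * x (e j) := rfl

@[simp] lemma csMap_apply {d : ℕ} (u : Fin d → ℂ) (hu : ∀ j, ‖u j‖ = 1) (e : Fin d ≃ Fin d)
    (w : CSph d) (j : Fin d) :
    ((csMap (uIso u hu e) w : EuclideanSpace ℂ (Fin d))) j
      = u j * (w : EuclideanSpace ℂ (Fin d)) (e j) := rfl

lemma integ_comp {d : ℕ} {μ : Measure (CSph d)} (hμ : IsUniformC μ)
    (f : EuclideanSpace ℂ (Fin d) ≃ₗᵢ[ℂ] EuclideanSpace ℂ (Fin d))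
    {g : CSph d → ℂ} (hg : Continuous g) :
    ∫ w, g (csMap f w) ∂μ = ∫ w, g w ∂μ := by
  have hc : Continuous (csMap f) :=
    Continuous.subtype_mk (f.continuous.comp continuous_subtype_val) _
  calc ∫ w, g (csMap f w) ∂μ
      = ∫ w, g w ∂(Measure.map (csMap f) μ) :=
        (integral_map hc.aemeasurable hg.aestronglyMeasurable).symm
    _ = ∫ w, g w ∂μ := by rw [hμ.2 f]

lemma cont_coord {d : ℕ} (j : Fin d) :
    Continuous fun w : CSph d => (w : EuclideanSpace ℂ (Fin d)) j :=
  (EuclideanSpace.proj (𝕜 := ℂ) j).continuous.comp continuous_subtype_val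

lemma integrable_of_cont {d : ℕ} {μ : Measure (CSph d)} [IsProbabilityMeasure μ]
    {g : CSph d → ℂ} (hg : Continuous g) : Integrable g μ :=
  hg.integrable_of_hasCompactSupport (isClosed_tsupport _).isCompact

lemma int_eigen {d : ℕ} {μ : Measure (CSph d)} (hμ : IsUniformC μ)
    (f : EuclideanSpace ℂ (Fin d) ≃ₗᵢ[ℂ] EuclideanSpace ℂ (Fin d))
    {g : CSph d → ℂ} (hg : Continuous g) {c : ℂ} (hc : c ≠ 1)
    (h : ∀ w, g (csMap f w) = c * g w) : ∫ w, g w ∂μ = 0 := by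
  have h1 : ∫ w, g w ∂μ = c * ∫ w, g w ∂μ := by
    calc ∫ w, g w ∂μ = ∫ w, g (csMap f w) ∂μ := (integ_comp hμ f hg).symm
      _ = ∫ w, c • g w ∂μ := by
          refine integral_congr_ae (Filter.Eventually.of_forall fun w => ?_)
          show g (csMap f w) = c • g w
          rw [h w, smul_eq_mul]
      _ = c • ∫ w, g w ∂μ := integral_smul c g
      _ = c * ∫ w, g w ∂μ := smul_eq_mul _ _
  have h2 : (1 - c) * ∫ w, g w ∂μ = 0 := by linear_combination h1
  rcases mul_eq_zero.mp h2 with h3 | h3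
  · exact absurd (by linear_combination -h3 : c = 1) hc
  · exact h3

end Iso

section Sums

lemma comm3 {α β γ M : Type*} [Fintype α] [Fintype β] [Fintype γ] [AddCommMonoid M]
    (F : α → β → γ → M) :
    ∑ a, ∑ b, ∑ c, F a b c = ∑ c, ∑ a, ∑ b, F a b c := by
  rw [show (∑ a, ∑ b, ∑ c, F a b c) = ∑ a, ∑ c, ∑ b, F a b c from
    Finset.sum_congr rfl fun a _ => Finset.sum_comm]
  exact Finset.sum_comm

lemma sum_swap4 {α β γ δ M : Type*} [Fintype α] [Fintype β] [Fintype γ] [Fintype δ]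
    [AddCommMonoid M] (F : α → β → γ → δ → M) :
    ∑ a, ∑ b, ∑ c, ∑ e, F a b c e = ∑ c, ∑ e, ∑ a, ∑ b, F a b c e := by
  rw [comm3 fun a b c => ∑ e, F a b c e]
  exact Finset.sum_congr rfl fun c _ => comm3 fun a b e => F a b c e

lemma sum2 {ι κ : Type*} [Fintype ι] [Fintype κ] (x y : ι → κ → ℂ) :
    ∑ j, (∑ i, x i j) * (∑ i, y i j) = ∑ i, ∑ i', ∑ j, x i j * y i' j := by
  simp only [Finset.sum_mul_sum]
  exact (comm3 fun i i2 j => x i j * y i2 j).symm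

lemma sum4 {ι κ : Type*} [Fintype ι] [Fintype κ] (f1 f2 g1 g2 : ι → κ → ℂ) :
    ∑ j, ∑ k, (∑ i, f1 i j * f2 i k) * (∑ i, g1 i j * g2 i k)
      = ∑ i, ∑ i', (∑ j, f1 i j * g1 i' j) * (∑ k, f2 i k * g2 i' k) := by
  simp only [Finset.sum_mul_sum]
  rw [sum_swap4 fun j k i i' => (f1 i j * f2 i k) * (g1 i' j * g2 i' k)]
  refine Finset.sum_congr rfl fun i _ => Finset.sum_congr rfl fun i' _ => ?_
  refine Finset.sum_congr rfl fun j _ => Finset.sum_congr rfl fun k _ => ?_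
  ring

end Sums

lemma hre2 (w : ℂ) : (w * w + w * (starRingEnd ℂ) w).re = 2 * w.re ^ 2 := by
  rw [show w * w + w * (starRingEnd ℂ) w = w * (w + (starRingEnd ℂ) w) by ring,
    Complex.add_conj]
  simp [Complex.mul_re]
  ring

section pts
set_option linter.unusedSectionVars false
variable {d : ℕ} (hd : 1 ≤ d) (ζ : Fin (2 * d + 1) → Fin d → ℂ)
  (hone : ∀ i, ∑ j, ζ i j * (starRingEnd ℂ) (ζ i j) = 1)
  (hre : ∀ i i', i ≠ i' → (∑ j, ζ i j * (starRingEnd ℂ) (ζ i' j)).re = -(1 / (2 * (d : ℝ))))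

include hd hone hre

lemma offdiag_sum (F : ℝ → ℝ) :
    ∑ i, ∑ i', F ((∑ j, ζ i j * (starRingEnd ℂ) (ζ i' j)).re)
      = (2 * (d:ℝ) + 1) * (F 1 + 2 * d * F (-(1 / (2 * (d:ℝ))))) := by
  have hcard : (Finset.univ : Finset (Fin (2 * d + 1))).card = 2 * d + 1 := by simp
  have step : ∀ i, ∑ i', F ((∑ j, ζ i j * (starRingEnd ℂ) (ζ i' j)).re)
      = F 1 + 2 * d * F (-(1 / (2 * (d:ℝ)))) := by
    intro i
    rw [← Finset.add_sum_erase _ _ (mem_univ i)]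
    congr 1
    · rw [hone i]; norm_num
    · rw [Finset.sum_congr rfl fun i' hi' => by
        rw [hre i i' (Ne.symm (Finset.ne_of_mem_erase hi'))]]
      rw [Finset.sum_const, Finset.card_erase_of_mem (mem_univ i), hcard]
      simp [nsmul_eq_mul]
  rw [Finset.sum_congr rfl fun i _ => step i, Finset.sum_const, hcard]
  simp [nsmul_eq_mul]
  ring

lemma P1 : ∀ j, ∑ i, ζ i j = 0 := by
  have key : ∑ j, Complex.normSq (∑ i, ζ i j) = 0 := by
    have e1 : ∑ j, (∑ i, ζ i j) * (starRingEnd ℂ) (∑ i, ζ i j)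
        = ∑ i, ∑ i', ∑ j, ζ i j * (starRingEnd ℂ) (ζ i' j) := by
      rw [Finset.sum_congr rfl fun j _ => by rw [map_sum (starRingEnd ℂ)]]
      exact sum2 ζ fun i j => (starRingEnd ℂ) (ζ i j)
    have e2 : ∑ j, Complex.normSq (∑ i, ζ i j)
        = (∑ j, (∑ i, ζ i j) * (starRingEnd ℂ) (∑ i, ζ i j)).re := by
      rw [Complex.re_sum]
      exact Finset.sum_congr rfl fun j _ => by rw [Complex.mul_conj]; simp
    rw [e2, e1, Complex.re_sum]
    rw [Finset.sum_congr rfl fun i _ => Complex.re_sum _ _]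
    rw [offdiag_sum hd ζ hone hre fun r => r]
    have hdne : (d : ℝ) ≠ 0 := by positivity
    field_simp
    ring
  intro j
  have := (Finset.sum_eq_zero_iff_of_nonneg
    (fun j _ => Complex.normSq_nonneg (∑ i, ζ i j))).mp key j (mem_univ j)
  exact Complex.normSq_eq_zero.mp this

lemma P23 : (∀ j k, ∑ i, ζ i j * ζ i k = 0) ∧
    (∀ j k, ∑ i, ζ i j * (starRingEnd ℂ) (ζ i k)
      = if j = k then (((2 * (d:ℝ) + 1) / d : ℝ) : ℂ) else 0) := by
  classical
  set c : ℝ := (2 * (d:ℝ) + 1) / d with hc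
  set B : Fin d → Fin d → ℂ := fun j k => ∑ i, ζ i j * ζ i k with hB
  set A : Fin d → Fin d → ℂ := fun j k => ∑ i, ζ i j * (starRingEnd ℂ) (ζ i k) with hA
  set M : Fin d → Fin d → ℂ := fun j k => A j k - (if j = k then (c:ℂ) else 0) with hM
  have hdne : (d : ℝ) ≠ 0 := by positivity
  have etr : ∑ j, A j j = ((2 * (d:ℝ) + 1 : ℝ) : ℂ) := by
    rw [hA]
    simp only []
    rw [Finset.sum_comm]
    rw [Finset.sum_congr rfl fun i _ => hone i, Finset.sum_const]
    simp [nsmul_eq_mul]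
  have hconjB : ∀ j k, (starRingEnd ℂ) (B j k)
      = ∑ i, (starRingEnd ℂ) (ζ i j) * (starRingEnd ℂ) (ζ i k) := by
    intro j k; rw [hB]; simp
  have hconjA : ∀ j k, (starRingEnd ℂ) (A j k)
      = ∑ i, (starRingEnd ℂ) (ζ i j) * ζ i k := by
    intro j k; rw [hA]; simp
  have eB : ∑ j, ∑ k, B j k * (starRingEnd ℂ) (B j k)
      = ∑ i, ∑ i', (∑ j, ζ i j * (starRingEnd ℂ) (ζ i' j))
          * (∑ k, ζ i k * (starRingEnd ℂ) (ζ i' k)) := by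
    rw [Finset.sum_congr rfl fun j _ => Finset.sum_congr rfl fun k _ => by
      rw [hconjB j k]]
    exact sum4 ζ ζ (fun i j => (starRingEnd ℂ) (ζ i j)) (fun i j => (starRingEnd ℂ) (ζ i j))
  have eA : ∑ j, ∑ k, A j k * (starRingEnd ℂ) (A j k)
      = ∑ i, ∑ i', (∑ j, ζ i j * (starRingEnd ℂ) (ζ i' j))
          * (starRingEnd ℂ) (∑ k, ζ i k * (starRingEnd ℂ) (ζ i' k)) := by
    rw [Finset.sum_congr rfl fun j _ => Finset.sum_congr rfl fun k _ => by
      rw [hconjA j k]]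
    rw [sum4 ζ (fun i k => (starRingEnd ℂ) (ζ i k)) (fun i j => (starRingEnd ℂ) (ζ i j)) ζ]
    refine Finset.sum_congr rfl fun i _ => Finset.sum_congr rfl fun i' _ => ?_
    congr 1
    simp
  have eM : ∑ j, ∑ k, M j k * (starRingEnd ℂ) (M j k)
      = (∑ j, ∑ k, A j k * (starRingEnd ℂ) (A j k))
        - (c : ℂ) * (starRingEnd ℂ) (∑ j, A j j) - (c : ℂ) * (∑ j, A j j)
        + ((d * c ^ 2 : ℝ) : ℂ) := by
    have expand : ∀ j k, M j k * (starRingEnd ℂ) (M j k)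
        = A j k * (starRingEnd ℂ) (A j k)
          - (if j = k then (c:ℂ) * (starRingEnd ℂ) (A j k) else 0)
          - (if j = k then (c:ℂ) * A j k else 0)
          + (if j = k then ((c^2 : ℝ) : ℂ) else 0) := by
      intro j k
      rw [hM]
      simp only []
      split_ifs with hjk
      · rw [map_sub]
        simp [Complex.conj_ofReal]
        push_cast
        ring
      · simp
    rw [Finset.sum_congr rfl fun j _ => Finset.sum_congr rfl fun k _ => expand j k]
    simp only [Finset.sum_add_distrib, Finset.sum_sub_distrib]
    congr 1
    · congr 2
      · rw [Finset.sum_congr rfl fun j _ => Finset.sum_ite_eq (Finset.univ) j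
          (fun k => (c:ℂ) * (starRingEnd ℂ) (A j k))]
        rw [map_sum]
        simp [Finset.mul_sum]
      · rw [Finset.sum_congr rfl fun j _ => Finset.sum_ite_eq (Finset.univ) j
          (fun k => (c:ℂ) * A j k)]
        simp [Finset.mul_sum]
    · rw [Finset.sum_congr rfl fun j _ => Finset.sum_ite_eq (Finset.univ) j
        (fun k => ((c^2 : ℝ) : ℂ))]
      simp
  have key : ∑ j, ∑ k, (Complex.normSq (B j k) + Complex.normSq (M j k)) = 0 := by
    have e0 : ∑ j, ∑ k, (Complex.normSq (B j k) + Complex.normSq (M j k))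
        = (∑ j, ∑ k, (B j k * (starRingEnd ℂ) (B j k) + M j k * (starRingEnd ℂ) (M j k))).re := by
      rw [Complex.re_sum]
      refine Finset.sum_congr rfl fun j _ => ?_
      rw [Complex.re_sum]
      refine Finset.sum_congr rfl fun k _ => ?_
      rw [Complex.mul_conj, Complex.mul_conj]
      push_cast
      simp
    rw [e0]
    rw [Finset.sum_congr rfl fun j _ => Finset.sum_add_distrib, Finset.sum_add_distrib]
    rw [eB, eM, eA, etr, Complex.conj_ofReal]
    rw [Complex.add_re, Complex.add_re, Complex.sub_re, Complex.sub_re]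
    have hre_cN : ((c:ℂ) * ((2*(d:ℝ)+1 : ℝ):ℂ)).re = c * (2*(d:ℝ)+1) := by
      rw [← Complex.ofReal_mul, Complex.ofReal_re]
    rw [hre_cN, Complex.ofReal_re]
    have t3 : (∑ i, ∑ i', (∑ j, ζ i j * (starRingEnd ℂ) (ζ i' j))
            * (∑ k, ζ i k * (starRingEnd ℂ) (ζ i' k))).re
        + (∑ i, ∑ i', (∑ j, ζ i j * (starRingEnd ℂ) (ζ i' j))
            * (starRingEnd ℂ) (∑ k, ζ i k * (starRingEnd ℂ) (ζ i' k))).re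
        = ∑ i, ∑ i', 2 * ((∑ j, ζ i j * (starRingEnd ℂ) (ζ i' j)).re)^2 := by
      rw [Complex.re_sum, Complex.re_sum, ← Finset.sum_add_distrib]
      refine Finset.sum_congr rfl fun i _ => ?_
      rw [Complex.re_sum, Complex.re_sum, ← Finset.sum_add_distrib]
      refine Finset.sum_congr rfl fun i' _ => ?_
      rw [← Complex.add_re]
      exact hre2 _
    rw [offdiag_sum hd ζ hone hre (fun r => 2*r^2)] at t3
    have harith : (2*(d:ℝ)+1) * (2*1^2 + 2*(d:ℝ)*(2*(-(1/(2*(d:ℝ))))^2))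
        = 2 * (c * (2*(d:ℝ)+1)) - (d:ℝ)*c^2 := by
      rw [hc]; field_simp; ring
    linarith [t3, harith]
  have each : ∀ j k, Complex.normSq (B j k) + Complex.normSq (M j k) = 0 := by
    intro j k
    have h1 := (Finset.sum_eq_zero_iff_of_nonneg (fun j _ => Finset.sum_nonneg
      (fun k _ => add_nonneg (Complex.normSq_nonneg _) (Complex.normSq_nonneg _)))).mp key j
      (mem_univ j)
    exact (Finset.sum_eq_zero_iff_of_nonneg (fun k _ => add_nonneg (Complex.normSq_nonneg _)
      (Complex.normSq_nonneg _))).mp h1 k (mem_univ k)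
  constructor
  · intro j k
    have := each j k
    have hb : Complex.normSq (B j k) = 0 := by
      nlinarith [Complex.normSq_nonneg (B j k), Complex.normSq_nonneg (M j k)]
    exact Complex.normSq_eq_zero.mp hb
  · intro j k
    have := each j k
    have hm : Complex.normSq (M j k) = 0 := by
      nlinarith [Complex.normSq_nonneg (B j k), Complex.normSq_nonneg (M j k)]
    have := Complex.normSq_eq_zero.mp hm
    rw [hM] at this
    simp only [] at this
    have := sub_eq_zero.mp this
    rw [hA] at this
    simpa using this

end pts

section Mono

lemma deg_zero {σ : Type*} (m : σ →₀ ℕ) (h : (m.sum fun _ e => e) = 0) : m = 0 := by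
  ext a
  by_contra ha
  have h1 : m a ≤ m.sum fun _ e => e :=
    Finset.single_le_sum (f := fun a => m a) (fun _ _ => Nat.zero_le _)
      (Finsupp.mem_support_iff.mpr ha)
  simp only [Finsupp.coe_zero, Pi.zero_apply] at ha ⊢
  omega

lemma deg_pos {σ : Type*} [DecidableEq σ] (m : σ →₀ ℕ) (n : ℕ)
    (h : (m.sum fun _ e => e) = n + 1) :
    ∃ a m', m = Finsupp.single a 1 + m' ∧ (m'.sum fun _ e => e) = n := by
  have hm : m ≠ 0 := by rintro rfl; simp at h
  obtain ⟨a, ha⟩ : ∃ a, m a ≠ 0 := by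
    by_contra hcon; push_neg at hcon
    exact hm (Finsupp.ext fun a => hcon a)
  have heq : m = Finsupp.single a 1 + (m - Finsupp.single a 1) := by
    ext b
    have h2 := Finsupp.tsub_apply m (Finsupp.single a 1) b
    rcases eq_or_ne b a with rfl | hb
    · have h1 : (Finsupp.single b (1:ℕ)) b = 1 := Finsupp.single_eq_same
      simp only [Finsupp.coe_add, Pi.add_apply, h1, h2]
      omega
    · have h1 : (Finsupp.single a (1:ℕ)) b = 0 := Finsupp.single_eq_of_ne' (Ne.symm hb)
      simp only [Finsupp.coe_add, Pi.add_apply, h1, h2]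
      omega
  refine ⟨a, m - Finsupp.single a 1, heq, ?_⟩
  rw [heq, Finsupp.sum_add_index' (fun _ => rfl) (fun _ _ _ => rfl)] at h
  rw [Finsupp.sum_single_index rfl] at h
  omega

lemma deg_cases {σ : Type*} [DecidableEq σ] (m : σ →₀ ℕ) (h : (m.sum fun _ e => e) ≤ 2) :
    m = 0 ∨ (∃ a, m = Finsupp.single a 1)
      ∨ (∃ a b, m = Finsupp.single a 1 + Finsupp.single b 1) := by
  have h3 : (m.sum fun _ e => e) = 0 ∨ (m.sum fun _ e => e) = 1
      ∨ (m.sum fun _ e => e) = 2 := by omega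
  rcases h3 with h3 | h3 | h3
  · exact Or.inl (deg_zero m h3)
  · obtain ⟨a, m', hm, hs⟩ := deg_pos m 0 h3
    rw [deg_zero m' hs] at hm
    exact Or.inr (Or.inl ⟨a, by simpa using hm⟩)
  · obtain ⟨a, m', hm, hs⟩ := deg_pos m 1 h3
    obtain ⟨b, m'', hm', hs'⟩ := deg_pos m' 0 hs
    rw [deg_zero m'' hs'] at hm'
    rw [hm'] at hm
    exact Or.inr (Or.inr ⟨a, b, by simpa using hm⟩)

end Mono

def vmap {d : ℕ} (w : CSph d) : Fin d ⊕ Fin d → ℂ :=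
  Sum.elim (fun j => (w : EuclideanSpace ℂ (Fin d)) j)
    (fun j => (starRingEnd ℂ) ((w : EuclideanSpace ℂ (Fin d)) j))

@[simp] lemma vmap_inl {d : ℕ} (w : CSph d) (j : Fin d) :
    vmap w (Sum.inl j) = (w : EuclideanSpace ℂ (Fin d)) j := rfl
@[simp] lemma vmap_inr {d : ℕ} (w : CSph d) (j : Fin d) :
    vmap w (Sum.inr j) = (starRingEnd ℂ) ((w : EuclideanSpace ℂ (Fin d)) j) := rfl

lemma evalC_eq {d : ℕ} (Q : MvPolynomial (Fin d ⊕ Fin d) ℂ) (w : CSph d) :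
    evalC Q w = MvPolynomial.eval (vmap w) Q := rfl

lemma cont_v {d : ℕ} (a : Fin d ⊕ Fin d) : Continuous fun w : CSph d => vmap w a := by
  cases a with
  | inl j => exact cont_coord j
  | inr j => exact Complex.continuous_conj.comp (cont_coord j)

lemma cont_eval {d : ℕ} (Q : MvPolynomial (Fin d ⊕ Fin d) ℂ) :
    Continuous fun w : CSph d => MvPolynomial.eval (vmap w) Q := by
  induction Q using MvPolynomial.induction_on with
  | C c => simpa using continuous_const
  | add p q hp hq => simp only [map_add]; exact hp.add hq
  | mul_X p a hp => simp only [map_mul, eval_X]; exact hp.mul (cont_v a)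

lemma sphere_sum {d : ℕ} (w : CSph d) :
    ∑ j, (w : EuclideanSpace ℂ (Fin d)) j
      * (starRingEnd ℂ) ((w : EuclideanSpace ℂ (Fin d)) j) = 1 := by
  have hw : ‖(w : EuclideanSpace ℂ (Fin d))‖ = 1 := by
    have := w.2
    simpa [mem_sphere_iff_norm] using this
  have h2 : ∑ j, ‖(w : EuclideanSpace ℂ (Fin d)) j‖ ^ 2 = 1 := by
    have hn := EuclideanSpace.norm_eq (w : EuclideanSpace ℂ (Fin d))
    rw [hw] at hn
    have h3 := congrArg (fun r : ℝ => r ^ 2) hn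
    simpa [Real.sq_sqrt (Finset.sum_nonneg fun j _ => sq_nonneg _)] using h3.symm
  have hterm : ∀ x : ℂ, x * (starRingEnd ℂ) x = ((‖x‖ ^ 2 : ℝ) : ℂ) := by
    intro x
    rw [Complex.mul_conj]
    norm_cast
    simp [Complex.normSq_eq_norm_sq]
  rw [Finset.sum_congr rfl fun j _ => hterm _]
  rw [← Complex.ofReal_sum, h2, Complex.ofReal_one]

/-- a regular simplex of `2d+1` points on `Ω^d` is a triangular complex
spherical `2`-design. -/
theorem simplex_is_two_design (d : ℕ) (hd : 1 ≤ d)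
    (μ : Measure (CSph d)) (hμ : IsUniformC μ)
    (z : Fin (2 * d + 1) → CSph d)
    (hz : ∀ i j, i ≠ j →
      (hInnerC ((z i) : EuclideanSpace ℂ (Fin d)) ((z j) : EuclideanSpace ℂ (Fin d))).re =
        -(1 / (2 * (d : ℝ)))) :
    IsTriDesign μ 2 z := by
  classical
  haveI : IsProbabilityMeasure μ := hμ.1
  have hdC : (d : ℂ) ≠ 0 := by
    simp only [ne_eq, Nat.cast_eq_zero]; omega
  have hNC : ((2 * d + 1 : ℕ) : ℂ) ≠ 0 := by
    simp only [ne_eq, Nat.cast_eq_zero]; omega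
  have hNC' : (2 * (d:ℂ) + 1) ≠ 0 := by
    intro h
    apply hNC
    push_cast
    exact h
  -- point-side data
  set ζ : Fin (2 * d + 1) → Fin d → ℂ := fun i j => (z i : EuclideanSpace ℂ (Fin d)) j with hζ
  have hone : ∀ i, ∑ j, ζ i j * (starRingEnd ℂ) (ζ i j) = 1 := fun i => sphere_sum (z i)
  have hre : ∀ i i', i ≠ i' →
      (∑ j, ζ i j * (starRingEnd ℂ) (ζ i' j)).re = -(1 / (2 * (d : ℝ))) :=
    fun i i' h => hz i i' h
  have HP1 := P1 hd ζ hone hre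
  obtain ⟨HP2, HP3⟩ := P23 hd ζ hone hre
  -- isometries
  have huI : ∀ j : Fin d, ‖(fun _ : Fin d => Complex.I) j‖ = 1 := fun _ => by simp
  have hu1 : ∀ j : Fin d, ‖(fun _ : Fin d => (1:ℂ)) j‖ = 1 := fun _ => by simp
  set isoI := uIso (fun _ : Fin d => Complex.I) huI (Equiv.refl _) with hisoI
  -- integral facts
  have intI1 : ∀ a : Fin d ⊕ Fin d, ∫ w, vmap w a ∂μ = 0 := by
    intro a
    cases a with
    | inl j =>
        refine int_eigen hμ isoI (cont_v (Sum.inl j)) (c := Complex.I) ?_ ?_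
        · intro h; simpa [Complex.ext_iff] using h
        · intro w; simp [hisoI]
    | inr j =>
        refine int_eigen hμ isoI (cont_v (Sum.inr j)) (c := -Complex.I) ?_ ?_
        · intro h
          have := congrArg Complex.im h
          simp at this
        · intro w; simp [hisoI, Complex.conj_I]
  have intJ1 : ∀ j k : Fin d, ∫ w, vmap w (Sum.inl j) * vmap w (Sum.inl k) ∂μ = 0 := by
    intro j k
    refine int_eigen hμ isoI ((cont_v (Sum.inl j)).mul (cont_v (Sum.inl k)))
      (c := (-1 : ℂ)) ?_ ?_
    · intro h
      have := congrArg Complex.re h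
      norm_num at this
    · intro w
      simp [hisoI]
      linear_combination ((w : EuclideanSpace ℂ (Fin d)) j
        * (w : EuclideanSpace ℂ (Fin d)) k) * Complex.I_sq
  have intJ2 : ∀ j k : Fin d, ∫ w, vmap w (Sum.inr j) * vmap w (Sum.inr k) ∂μ = 0 := by
    intro j k
    refine int_eigen hμ isoI ((cont_v (Sum.inr j)).mul (cont_v (Sum.inr k)))
      (c := (-1 : ℂ)) ?_ ?_
    · intro h
      have := congrArg Complex.re h
      norm_num at this
    · intro w
      simp [hisoI, Complex.conj_I]
      linear_combination ((starRingEnd ℂ) ((w : EuclideanSpace ℂ (Fin d)) j)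
        * (starRingEnd ℂ) ((w : EuclideanSpace ℂ (Fin d)) k)) * Complex.I_sq
  have intJ3 : ∀ j k : Fin d, j ≠ k →
      ∫ w, vmap w (Sum.inl j) * vmap w (Sum.inr k) ∂μ = 0 := by
    intro j k hjk
    have hu : ∀ m : Fin d, ‖(fun m => if m = j then (-1:ℂ) else 1) m‖ = 1 := by
      intro m; by_cases hm : m = j <;> simp [hm]
    refine int_eigen hμ (uIso _ hu (Equiv.refl _))
      ((cont_v (Sum.inl j)).mul (cont_v (Sum.inr k))) (c := (-1 : ℂ)) ?_ ?_
    · intro h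
      have := congrArg Complex.re h
      norm_num at this
    · intro w
      have e1 : vmap (csMap (uIso _ hu (Equiv.refl _)) w) (Sum.inl j)
          = -(vmap w (Sum.inl j)) := by simp
      have e2 : vmap (csMap (uIso _ hu (Equiv.refl _)) w) (Sum.inr k)
          = vmap w (Sum.inr k) := by simp [Ne.symm hjk]
      rw [e1, e2]
      ring
  have intJ4 : ∀ j : Fin d,
      ∫ w, vmap w (Sum.inl j) * vmap w (Sum.inr j) ∂μ = (d : ℂ)⁻¹ := by
    intro j
    have swapint : ∀ k : Fin d,
        ∫ w, vmap w (Sum.inl k) * vmap w (Sum.inr k) ∂μ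
          = ∫ w, vmap w (Sum.inl j) * vmap w (Sum.inr j) ∂μ := by
      intro k
      have hint := integ_comp hμ (uIso (fun _ => (1:ℂ)) hu1 (Equiv.swap j k))
        (g := fun w => vmap w (Sum.inl j) * vmap w (Sum.inr j))
        ((cont_v (Sum.inl j)).mul (cont_v (Sum.inr j)))
      rw [← hint]
      refine integral_congr_ae (Filter.Eventually.of_forall fun w => ?_)
      show vmap w (Sum.inl k) * vmap w (Sum.inr k)
          = ((1:ℂ) * (w : EuclideanSpace ℂ (Fin d)) ((Equiv.swap j k) j))
            * (starRingEnd ℂ) ((1:ℂ) * (w : EuclideanSpace ℂ (Fin d)) ((Equiv.swap j k) j))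
      rw [Equiv.swap_apply_left]
      simp
    have sumint : ∑ k : Fin d, ∫ w, vmap w (Sum.inl k) * vmap w (Sum.inr k) ∂μ = 1 := by
      rw [← integral_finset_sum univ (fun k _ =>
        integrable_of_cont (g := fun w => vmap w (Sum.inl k) * vmap w (Sum.inr k)) ((cont_v (Sum.inl k)).mul (cont_v (Sum.inr k))))]
      have : ∀ w : CSph d, ∑ k : Fin d, vmap w (Sum.inl k) * vmap w (Sum.inr k) = 1 := by
        intro w
        simpa using sphere_sum w
      rw [integral_congr_ae (Filter.Eventually.of_forall fun w => this w)]
      simp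
    rw [Finset.sum_congr rfl fun k _ => swapint k, Finset.sum_const, card_univ,
      Fintype.card_fin] at sumint
    rw [nsmul_eq_mul, mul_comm] at sumint
    exact eq_inv_of_mul_eq_one_left sumint
  -- the monomial lemma
  have mono : ∀ m : (Fin d ⊕ Fin d) →₀ ℕ, (m.sum fun _ e => e) ≤ 2 →
      ((2 * d + 1 : ℕ) : ℂ)⁻¹ * ∑ i, MvPolynomial.eval (vmap (z i)) (monomial m (1:ℂ))
        = ∫ w, MvPolynomial.eval (vmap w) (monomial m (1:ℂ)) ∂μ := by
    intro m hm
    rcases deg_cases m hm with h0 | ⟨a, ha⟩ | ⟨a, b, hab⟩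
    · subst h0
      simp only [monomial_zero', eval_C]
      rw [Finset.sum_const, card_univ, Fintype.card_fin, nsmul_eq_mul, mul_one]
      rw [inv_mul_cancel₀ hNC]
      rw [integral_const]
      simp
    · subst ha
      have hX : (monomial (Finsupp.single a 1) (1:ℂ) : MvPolynomial (Fin d ⊕ Fin d) ℂ)
          = X a := rfl
      rw [hX]
      simp only [eval_X]
      rw [intI1 a]
      cases a with
      | inl j =>
          have : ∑ i, vmap (z i) (Sum.inl j) = 0 := HP1 j
          rw [this, mul_zero]
      | inr j =>
          have : ∑ i, vmap (z i) (Sum.inr j) = 0 := by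
            simp only [vmap_inr]
            rw [← map_sum (starRingEnd ℂ)]
            rw [show (∑ i, (z i : EuclideanSpace ℂ (Fin d)) j) = 0 from HP1 j]
            simp
          rw [this, mul_zero]
    · subst hab
      have hXX : (monomial (Finsupp.single a 1 + Finsupp.single b 1) (1:ℂ)
            : MvPolynomial (Fin d ⊕ Fin d) ℂ) = X a * X b := by
        rw [show (X a : MvPolynomial (Fin d ⊕ Fin d) ℂ) = monomial (Finsupp.single a 1) 1
            from rfl,
          show (X b : MvPolynomial (Fin d ⊕ Fin d) ℂ) = monomial (Finsupp.single b 1) 1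
            from rfl,
          monomial_mul, one_mul]
      rw [hXX]
      simp only [map_mul, eval_X]
      cases a with
      | inl j =>
          cases b with
          | inl k =>
              rw [intJ1 j k]
              rw [show (∑ i, vmap (z i) (Sum.inl j) * vmap (z i) (Sum.inl k)) = 0 from
                HP2 j k]
              rw [mul_zero]
          | inr k =>
              by_cases hjk : j = k
              · subst hjk
                rw [intJ4 j]
                rw [show (∑ i, vmap (z i) (Sum.inl j) * vmap (z i) (Sum.inr j))
                    = (((2 * (d:ℝ) + 1) / d : ℝ) : ℂ) from by simpa using HP3 j j]
                push_cast
                field_simp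
              · rw [intJ3 j k hjk]
                rw [show (∑ i, vmap (z i) (Sum.inl j) * vmap (z i) (Sum.inr k)) = 0 from by
                  simpa [if_neg hjk] using HP3 j k]
                rw [mul_zero]
      | inr j =>
          cases b with
          | inl k =>
              rw [show (∫ w, vmap w (Sum.inr j) * vmap w (Sum.inl k) ∂μ)
                  = ∫ w, vmap w (Sum.inl k) * vmap w (Sum.inr j) ∂μ from by
                refine integral_congr_ae (Filter.Eventually.of_forall fun w => ?_)
                ring]
              rw [show (∑ i, vmap (z i) (Sum.inr j) * vmap (z i) (Sum.inl k))
                  = ∑ i, vmap (z i) (Sum.inl k) * vmap (z i) (Sum.inr j) from by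
                refine Finset.sum_congr rfl fun i _ => ?_
                ring]
              by_cases hjk : k = j
              · subst hjk
                rw [intJ4 k]
                rw [show (∑ i, vmap (z i) (Sum.inl k) * vmap (z i) (Sum.inr k))
                    = (((2 * (d:ℝ) + 1) / d : ℝ) : ℂ) from by simpa using HP3 k k]
                push_cast
                field_simp
              · rw [intJ3 k j hjk]
                rw [show (∑ i, vmap (z i) (Sum.inl k) * vmap (z i) (Sum.inr j)) = 0 from by
                  simpa [if_neg hjk] using HP3 k j]
                rw [mul_zero]
          | inr k =>
              rw [intJ2 j k]
              rw [show (∑ i, vmap (z i) (Sum.inr j) * vmap (z i) (Sum.inr k)) = 0 from by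
                simp only [vmap_inr, ← map_mul, ← map_sum (starRingEnd ℂ)]
                rw [show (∑ i, (z i : EuclideanSpace ℂ (Fin d)) j
                    * (z i : EuclideanSpace ℂ (Fin d)) k) = 0 from HP2 j k]
                simp]
              rw [mul_zero]
  -- assembly
  intro Q hQ
  simp only [evalC_eq, Fintype.card_fin]
  conv_lhs => rw [MvPolynomial.as_sum Q]
  conv_rhs => rw [MvPolynomial.as_sum Q]
  have expand : ∀ w : CSph d, MvPolynomial.eval (vmap w)
        (∑ m ∈ Q.support, monomial m (coeff m Q))
      = ∑ m ∈ Q.support, coeff m Q * MvPolynomial.eval (vmap w) (monomial m (1:ℂ)) := by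
    intro w
    rw [map_sum]
    refine Finset.sum_congr rfl fun m _ => ?_
    rw [show (monomial m (coeff m Q) : MvPolynomial (Fin d ⊕ Fin d) ℂ)
        = C (coeff m Q) * monomial m 1 from by rw [C_mul_monomial, mul_one]]
    rw [map_mul, eval_C]
  calc ((2 * d + 1 : ℕ) : ℂ)⁻¹ * ∑ i, MvPolynomial.eval (vmap (z i))
        (∑ m ∈ Q.support, monomial m (coeff m Q))
      = ∑ m ∈ Q.support, coeff m Q * (((2 * d + 1 : ℕ) : ℂ)⁻¹
          * ∑ i, MvPolynomial.eval (vmap (z i)) (monomial m (1:ℂ))) := by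
        rw [Finset.sum_congr rfl fun i _ => expand (z i)]
        rw [Finset.sum_comm]
        rw [Finset.mul_sum]
        refine Finset.sum_congr rfl fun m _ => ?_
        rw [← Finset.mul_sum]
        ring
    _ = ∑ m ∈ Q.support, coeff m Q
          * ∫ w, MvPolynomial.eval (vmap w) (monomial m (1:ℂ)) ∂μ := by
        refine Finset.sum_congr rfl fun m hmem => ?_
        rw [mono m (le_trans (MvPolynomial.le_totalDegree hmem) hQ)]
    _ = ∫ w, MvPolynomial.eval (vmap w)
          (∑ m ∈ Q.support, monomial m (coeff m Q)) ∂μ := by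
        rw [integral_congr_ae (Filter.Eventually.of_forall fun w => expand w)]
        rw [integral_finset_sum _ (fun m _ => (integrable_of_cont
          ((cont_eval (monomial m (1:ℂ))))).const_mul (coeff m Q))]
        refine Finset.sum_congr rfl fun m _ => ?_
        rw [integral_const_mul]
end
end

section
/- Let d ≥ 2 and k, l ≥ 0. The ℂ-vector space of polynomials Q ∈ ℂ[u_1,…,u_d,v_1,…,v_d] that are homogeneous of degree k in the variables u_1,…,u_d, homogeneous of degree l in the variables v_1,…,v_d, and satisfy the harmonicity condition Σ_{j=1}^d ∂²Q/∂u_j∂v_j = 0, has dimension Z^{(d)}_{k,l} = (d−1)·(k+l+d−1)·Γ(d+k−1)·Γ(d+l−1) / (Γ(d)²·Γ(k+1)·Γ(l+1)). -/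
noncomputable section
open MeasureTheory Metric MvPolynomial ENNReal

/-- weight counting only the `u`-variables -/
def wU (d : ℕ) : Fin d ⊕ Fin d → ℕ := Sum.elim (fun _ => 1) (fun _ => 0)
/-- weight counting only the `v`-variables -/
def wV (d : ℕ) : Fin d ⊕ Fin d → ℕ := Sum.elim (fun _ => 0) (fun _ => 1)

/-- the formal Laplacian `∑_j ∂²/∂u_j∂v_j` -/
def laplaceUV (d : ℕ) :
    MvPolynomial (Fin d ⊕ Fin d) ℂ →ₗ[ℂ] MvPolynomial (Fin d ⊕ Fin d) ℂ :=
  ∑ j : Fin d, ((pderiv (R := ℂ) (Sum.inl j)).toLinearMap ∘ₗ (pderiv (Sum.inr j)).toLinearMap)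

/-- the space `ℋ_{k,l}`: polynomials homogeneous of degree `k` in `u`, degree `l` in `v`,
and annihilated by `∑_j ∂²/∂u_j∂v_j` -/
def biHarmSpace (d k l : ℕ) : Submodule ℂ (MvPolynomial (Fin d ⊕ Fin d) ℂ) :=
  weightedHomogeneousSubmodule ℂ (wU d) k ⊓ weightedHomogeneousSubmodule ℂ (wV d) l ⊓
    LinearMap.ker (laplaceUV d)

namespace BiHarm

variable {d : ℕ}

abbrev R (d : ℕ) := MvPolynomial (Fin d ⊕ Fin d) ℂ

lemma weight_fintype (w : Fin d ⊕ Fin d → ℕ) (m : Fin d ⊕ Fin d →₀ ℕ) :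
    Finsupp.weight w m = ∑ a : Fin d ⊕ Fin d, m a * w a := by
  rw [Finsupp.weight_apply, Finsupp.sum_fintype _ _ (by intro i; simp)]
  simp [smul_eq_mul]

lemma weight_wU (m : Fin d ⊕ Fin d →₀ ℕ) :
    Finsupp.weight (wU d) m = ∑ j : Fin d, m (Sum.inl j) := by
  rw [weight_fintype, Fintype.sum_sum_type]
  simp [wU]

lemma weight_wV (m : Fin d ⊕ Fin d →₀ ℕ) :
    Finsupp.weight (wV d) m = ∑ j : Fin d, m (Sum.inr j) := by
  rw [weight_fintype, Fintype.sum_sum_type]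
  simp [wV]

lemma weight_single (w : Fin d ⊕ Fin d → ℕ) (i : Fin d ⊕ Fin d) :
    Finsupp.weight w (Finsupp.single i 1) = w i := by
  rw [Finsupp.weight_apply, Finsupp.sum_single_index] <;> simp

/-- the bihomogeneous component of bidegree `(k, l)` -/
def W (d k l : ℕ) : Submodule ℂ (R d) :=
  weightedHomogeneousSubmodule ℂ (wU d) k ⊓ weightedHomogeneousSubmodule ℂ (wV d) l

lemma biHarm_eq (d k l : ℕ) :
    biHarmSpace d k l = W d k l ⊓ LinearMap.ker (laplaceUV d) := rfl

def S (d k l : ℕ) : Set (Fin d ⊕ Fin d →₀ ℕ) :=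
  {m | ∑ j : Fin d, m (Sum.inl j) = k} ∩ {m | ∑ j : Fin d, m (Sum.inr j) = l}

lemma W_eq (d k l : ℕ) : W d k l = restrictSupport ℂ (S d k l) := by
  rw [W, weightedHomogeneousSubmodule_eq_finsupp_supported,
    weightedHomogeneousSubmodule_eq_finsupp_supported, restrictSupport, S,
    (show ∀ s t : Set (Fin d ⊕ Fin d →₀ ℕ), AddMonoidAlgebra.supported ℂ ℂ (s ∩ t) =
      AddMonoidAlgebra.supported ℂ ℂ s ⊓ AddMonoidAlgebra.supported ℂ ℂ t from fun s t => by
        simp only [AddMonoidAlgebra.supported, Finsupp.supported_inter, Submodule.comap_inf])]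
  congr 2
  · ext m; simp [weight_wU]
  · ext m; simp [weight_wV]

def SEquiv (d k l : ℕ) : S d k l ≃ Sym (Fin d) k × Sym (Fin d) l := by
  refine Equiv.trans ?_ (Equiv.prodCongr (Sym.equivNatSum (Fin d) k).symm
    (Sym.equivNatSum (Fin d) l).symm)
  refine Equiv.trans ?_ Equiv.subtypeProdEquivProd
  refine (Finsupp.sumFinsuppEquivProdFinsupp).subtypeEquiv ?_
  intro m
  have h1 : ∀ a : Fin d →₀ ℕ, a.sum (fun _ ↦ id) = ∑ j : Fin d, a j := fun a =>
    Finsupp.sum_fintype _ _ (by intro i; simp)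
  constructor
  · rintro ⟨h, h'⟩
    constructor <;> rw [h1] <;> simpa [Finsupp.fst_sumFinsuppEquivProdFinsupp,
      Finsupp.snd_sumFinsuppEquivProdFinsupp]
  · rintro ⟨h, h'⟩
    rw [h1] at h h'
    constructor <;> simpa [Finsupp.fst_sumFinsuppEquivProdFinsupp,
      Finsupp.snd_sumFinsuppEquivProdFinsupp] using ‹_›

instance (d k l : ℕ) : Fintype (S d k l) := Fintype.ofEquiv _ (SEquiv d k l).symm

instance (d k l : ℕ) : FiniteDimensional ℂ (W d k l) := by
  rw [W_eq]
  exact Module.Finite.of_basis (basisRestrictSupport ℂ (S d k l))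

lemma finrank_W (d k l : ℕ) :
    Module.finrank ℂ (W d k l) = (d + k - 1).choose k * (d + l - 1).choose l := by
  have : Module.finrank ℂ (restrictSupport ℂ (S d k l)) = Fintype.card (S d k l) :=
    Module.finrank_eq_card_basis (basisRestrictSupport ℂ (S d k l))
  rw [W_eq, this, Fintype.card_congr (SEquiv d k l), Fintype.card_prod,
    Sym.card_sym_eq_choose, Sym.card_sym_eq_choose, Fintype.card_fin]

/-! ### derivatives and homogeneity -/

lemma pderiv_mem {w : Fin d ⊕ Fin d → ℕ} {n c : ℕ} {i : Fin d ⊕ Fin d} (hwi : w i = c)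
    {p : R d} (hp : p ∈ weightedHomogeneousSubmodule ℂ w n) :
    pderiv i p ∈ weightedHomogeneousSubmodule ℂ w (n - c) := by
  rw [p.as_sum, map_sum]
  apply sum_mem
  intro m hm
  rw [pderiv_monomial]
  rcases Nat.eq_zero_or_pos (m i) with h0 | hpos
  · simp [h0]
  · apply isWeightedHomogeneous_monomial
    have hw : Finsupp.weight w m = n := hp (MvPolynomial.mem_support_iff.1 hm)
    have hme : (m - Finsupp.single i 1) + Finsupp.single i 1 = m := by
      ext a
      rcases eq_or_ne a i with rfl | ha
      · simp [Finsupp.single_apply]; omega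
      · simp [Finsupp.single_apply, ha.symm]
    have := congrArg (Finsupp.weight w) hme
    rw [map_add, weight_single, hwi, hw] at this
    omega

lemma pderiv_vanish {w : Fin d ⊕ Fin d → ℕ} {i : Fin d ⊕ Fin d} (hwi : w i = 1)
    {p : R d} (hp : p ∈ weightedHomogeneousSubmodule ℂ w 0) :
    pderiv i p = 0 := by
  rw [p.as_sum, map_sum]
  apply Finset.sum_eq_zero
  intro m hm
  have hw : Finsupp.weight w m = 0 := hp (MvPolynomial.mem_support_iff.1 hm)
  rw [weight_fintype] at hw
  have h0 : m i = 0 := by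
    have := (Finset.sum_eq_zero_iff.1 hw) i (Finset.mem_univ i)
    rw [hwi] at this; omega
  rw [pderiv_monomial]
  simp [h0]

lemma X_mul_pderiv_monomial (i : Fin d ⊕ Fin d) (m : Fin d ⊕ Fin d →₀ ℕ) (c : ℂ) :
    X i * pderiv i (monomial m c) = (m i : ℂ) • monomial m c := by
  rw [pderiv_monomial]
  rcases Nat.eq_zero_or_pos (m i) with h0 | hpos
  · simp [h0]
  · rw [X, monomial_mul, one_mul, smul_monomial]
    have hme : Finsupp.single i 1 + (m - Finsupp.single i 1) = m := by
      ext a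
      rcases eq_or_ne a i with rfl | ha
      · simp [Finsupp.single_apply]; omega
      · simp [Finsupp.single_apply, ha.symm]
    rw [hme, smul_eq_mul, mul_comm]

lemma eulerU {n : ℕ} {p : R d} (hp : p ∈ weightedHomogeneousSubmodule ℂ (wU d) n) :
    ∑ j : Fin d, X (Sum.inl j) * pderiv (Sum.inl j) p = (n : ℂ) • p := by
  rw [p.as_sum]
  simp only [map_sum, Finset.mul_sum]
  rw [Finset.sum_comm, Finset.smul_sum]
  apply Finset.sum_congr rfl
  intro m hm
  simp only [X_mul_pderiv_monomial]
  rw [← Finset.sum_smul, ← Nat.cast_sum]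
  congr 1
  rw [← weight_wU m, hp (MvPolynomial.mem_support_iff.1 hm)]

lemma eulerV {n : ℕ} {p : R d} (hp : p ∈ weightedHomogeneousSubmodule ℂ (wV d) n) :
    ∑ j : Fin d, X (Sum.inr j) * pderiv (Sum.inr j) p = (n : ℂ) • p := by
  rw [p.as_sum]
  simp only [map_sum, Finset.mul_sum]
  rw [Finset.sum_comm, Finset.smul_sum]
  apply Finset.sum_congr rfl
  intro m hm
  simp only [X_mul_pderiv_monomial]
  rw [← Finset.sum_smul, ← Nat.cast_sum]
  congr 1
  rw [← weight_wV m, hp (MvPolynomial.mem_support_iff.1 hm)]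

/-! ### the quadratic form and the commutation identity -/

def r2 (d : ℕ) : R d := ∑ i : Fin d, X (Sum.inl i) * X (Sum.inr i)

lemma laplaceUV_apply (q : R d) :
    laplaceUV d q = ∑ j : Fin d, pderiv (Sum.inl j) (pderiv (Sum.inr j) q) := by
  simp [laplaceUV]

lemma term_lemma (i j : Fin d) (p : R d) :
    pderiv (Sum.inl j) (pderiv (Sum.inr j) (X (Sum.inl i) * X (Sum.inr i) * p)) =
      (if i = j then p + X (Sum.inl j) * pderiv (Sum.inl j) p
          + X (Sum.inr j) * pderiv (Sum.inr j) p else 0)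
        + X (Sum.inl i) * X (Sum.inr i) * pderiv (Sum.inl j) (pderiv (Sum.inr j) p) := by
  rcases eq_or_ne i j with rfl | h
  · simp only [if_pos rfl, pderiv_mul, pderiv_X_self,
      pderiv_X_of_ne (show (Sum.inl i : Fin d ⊕ Fin d) ≠ Sum.inr i by simp),
      pderiv_X_of_ne (show (Sum.inr i : Fin d ⊕ Fin d) ≠ Sum.inl i by simp), map_add, map_mul,
      map_zero, pderiv_one, zero_mul, mul_zero, mul_one, one_mul, if_true, add_zero, zero_add]
    ring
  · simp only [if_neg h, pderiv_mul,
      pderiv_X_of_ne (show (Sum.inl i : Fin d ⊕ Fin d) ≠ Sum.inr j by simp),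
      pderiv_X_of_ne (show (Sum.inr i : Fin d ⊕ Fin d) ≠ Sum.inr j by simp [h]),
      pderiv_X_of_ne (show (Sum.inl i : Fin d ⊕ Fin d) ≠ Sum.inl j by simp [h]),
      pderiv_X_of_ne (show (Sum.inr i : Fin d ⊕ Fin d) ≠ Sum.inl j by simp), map_add,
      map_zero, pderiv_one, zero_mul, mul_zero, mul_one, one_mul, add_zero, zero_add]

lemma lap_r2_mul (p : R d) :
    laplaceUV d (r2 d * p) = (d : ℂ) • p
      + (∑ j : Fin d, X (Sum.inl j) * pderiv (Sum.inl j) p)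
      + (∑ j : Fin d, X (Sum.inr j) * pderiv (Sum.inr j) p)
      + r2 d * laplaceUV d p := by
  conv_rhs => rw [laplaceUV_apply, r2]
  rw [laplaceUV_apply, r2, Finset.sum_mul]
  simp only [map_sum, term_lemma]
  simp only [Finset.sum_add_distrib]
  simp only [Finset.sum_ite_eq', Finset.mem_univ, if_true]
  simp only [Finset.sum_add_distrib, ← Finset.sum_mul, ← Finset.mul_sum]
  rw [Finset.sum_const, Finset.card_univ, Fintype.card_fin]
  rw [← Nat.cast_smul_eq_nsmul ℂ]

/-! ### membership lemmas -/

lemma r2_mem : r2 d ∈ W d 1 1 := by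
  apply sum_mem
  intro i _
  constructor
  · exact (isWeightedHomogeneous_X ℂ (wU d) (Sum.inl i)).mul
      (isWeightedHomogeneous_X ℂ (wU d) (Sum.inr i))
  · exact (isWeightedHomogeneous_X ℂ (wV d) (Sum.inl i)).mul
      (isWeightedHomogeneous_X ℂ (wV d) (Sum.inr i))

lemma mul_r2_mem {k l : ℕ} {p : R d} (hp : p ∈ W d k l) : r2 d * p ∈ W d (k + 1) (l + 1) := by
  have h1 := (r2_mem (d := d)).1.mul hp.1
  have h2 := (r2_mem (d := d)).2.mul hp.2
  rw [add_comm] at h1 h2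
  exact ⟨h1, h2⟩

lemma lap_mem {k l : ℕ} {p : R d} (hp : p ∈ W d (k + 1) (l + 1)) :
    laplaceUV d p ∈ W d k l := by
  rw [laplaceUV_apply]
  apply sum_mem
  intro j _
  constructor
  · have h1 : pderiv (Sum.inr j) p ∈ weightedHomogeneousSubmodule ℂ (wU d) (k + 1) := by
      simpa using pderiv_mem (w := wU d) (i := Sum.inr j) (c := 0) rfl hp.1
    simpa using pderiv_mem (w := wU d) (i := Sum.inl j) (c := 1) rfl h1
  · have h1 : pderiv (Sum.inr j) p ∈ weightedHomogeneousSubmodule ℂ (wV d) l := by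
      simpa using pderiv_mem (w := wV d) (i := Sum.inr j) (c := 1) rfl hp.2
    simpa using pderiv_mem (w := wV d) (i := Sum.inl j) (c := 0) rfl h1

lemma lap_zero_left {l : ℕ} {p : R d} (hp : p ∈ W d 0 l) : laplaceUV d p = 0 := by
  rw [laplaceUV_apply]
  apply Finset.sum_eq_zero
  intro j _
  have h1 : pderiv (Sum.inr j) p ∈ weightedHomogeneousSubmodule ℂ (wU d) 0 := by
    simpa using pderiv_mem (w := wU d) (i := Sum.inr j) (c := 0) rfl hp.1
  rw [pderiv_vanish rfl h1]

lemma lap_zero_right {k : ℕ} {p : R d} (hp : p ∈ W d k 0) : laplaceUV d p = 0 := by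
  rw [laplaceUV_apply]
  apply Finset.sum_eq_zero
  intro j _
  rw [pderiv_vanish rfl hp.2]
  simp

lemma lap_r2_mul_mem {k l : ℕ} {p : R d} (hp : p ∈ W d k l) :
    laplaceUV d (r2 d * p) = ((d + k + l : ℕ) : ℂ) • p + r2 d * laplaceUV d p := by
  rw [lap_r2_mul, eulerU hp.1, eulerV hp.2]
  push_cast
  module

/-! ### surjectivity of the Laplacian -/

lemma core (d : ℕ) : ∀ k l a : ℕ, 0 < a → ∀ q ∈ W d k l,
    ∃ s ∈ W d k l, (a : ℂ) • s + r2 d * laplaceUV d s = q := by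
  intro k
  induction k with
  | zero =>
    intro l a ha q hq
    have ha' : (a : ℂ) ≠ 0 := Nat.cast_ne_zero.2 (by omega)
    refine ⟨(a : ℂ)⁻¹ • q, Submodule.smul_mem _ _ hq, ?_⟩
    rw [_root_.map_smul, lap_zero_left hq, smul_zero, mul_zero, add_zero, smul_inv_smul₀ ha']
  | succ k ih =>
    intro l a ha q hq
    have ha' : (a : ℂ) ≠ 0 := Nat.cast_ne_zero.2 (by omega)
    cases l with
    | zero =>
      refine ⟨(a : ℂ)⁻¹ • q, Submodule.smul_mem _ _ hq, ?_⟩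
      rw [_root_.map_smul, lap_zero_right hq, smul_zero, mul_zero, add_zero, smul_inv_smul₀ ha']
    | succ l' =>
      have hΔq : laplaceUV d q ∈ W d k l' := lap_mem hq
      obtain ⟨w, hw, hweq⟩ := ih l' (a + (d + k + l')) (by omega) _ hΔq
      refine ⟨(a : ℂ)⁻¹ • (q - r2 d * w),
        Submodule.smul_mem _ _ (sub_mem hq (by simpa using mul_r2_mem hw)), ?_⟩
      have e1 : laplaceUV d q - (((d + k + l' : ℕ) : ℂ) • w + r2 d * laplaceUV d w)
          = (a : ℂ) • w := by
        rw [← hweq]; push_cast; module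
      rw [_root_.map_smul, map_sub, lap_r2_mul_mem hw, e1, smul_inv_smul₀ ha',
        smul_comm, smul_inv_smul₀ ha', sub_add_cancel]

lemma lap_surj {k l : ℕ} (hd : 0 < d) (q : R d) (hq : q ∈ W d k l) :
    ∃ p ∈ W d (k + 1) (l + 1), laplaceUV d p = q := by
  obtain ⟨s, hs, hseq⟩ := core d k l (d + k + l) (by omega) q hq
  exact ⟨r2 d * s, mul_r2_mem hs, by rw [lap_r2_mul_mem hs]; exact hseq⟩

/-! ### dimension count -/

def lapRestrict (d k l : ℕ) : W d (k + 1) (l + 1) →ₗ[ℂ] W d k l :=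
  (laplaceUV d).restrict (fun _ hp => lap_mem hp)

set_option synthInstance.maxHeartbeats 1000000 in
lemma finrank_biHarm_succ (hd : 0 < d) (k l : ℕ) :
    Module.finrank ℂ (biHarmSpace d (k + 1) (l + 1)) + Module.finrank ℂ (W d k l)
      = Module.finrank ℂ (W d (k + 1) (l + 1)) := by
  have hker : LinearMap.ker (lapRestrict d k l)
      = Submodule.comap (W d (k + 1) (l + 1)).subtype (biHarmSpace d (k + 1) (l + 1)) := by
    ext x
    simp only [LinearMap.mem_ker, Submodule.mem_comap, biHarm_eq, Submodule.mem_inf,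
      LinearMap.mem_ker, Submodule.coe_subtype]
    constructor
    · intro h
      refine ⟨x.2, ?_⟩
      have := congrArg (Subtype.val) h
      simpa [lapRestrict, LinearMap.restrict_apply] using this
    · intro h
      apply Subtype.ext
      simpa [lapRestrict, LinearMap.restrict_apply] using h.2
  have hrange : LinearMap.range (lapRestrict d k l) = ⊤ := by
    rw [LinearMap.range_eq_top]
    rintro ⟨q, hq⟩
    obtain ⟨p, hp, hpq⟩ := lap_surj hd q hq
    exact ⟨⟨p, hp⟩, Subtype.ext (by simpa [lapRestrict, LinearMap.restrict_apply] using hpq)⟩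
  have h1 := LinearMap.finrank_range_add_finrank_ker (lapRestrict d k l)
  rw [hrange, finrank_top, hker] at h1
  have h2 : Module.finrank ℂ (Submodule.comap (W d (k + 1) (l + 1)).subtype
      (biHarmSpace d (k + 1) (l + 1))) = Module.finrank ℂ (biHarmSpace d (k + 1) (l + 1)) := by
    have hle : biHarmSpace d (k + 1) (l + 1) ≤ W d (k + 1) (l + 1) := inf_le_left
    exact (Submodule.comapSubtypeEquivOfLe hle).finrank_eq
  rw [h2] at h1
  omega

lemma biHarm_eq_W_left (l : ℕ) : biHarmSpace d 0 l = W d 0 l := by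
  rw [biHarm_eq]
  exact inf_eq_left.2 (fun p hp => lap_zero_left hp)

lemma biHarm_eq_W_right (k : ℕ) : biHarmSpace d k 0 = W d k 0 := by
  rw [biHarm_eq]
  exact inf_eq_left.2 (fun p hp => lap_zero_right hp)

end BiHarm

lemma arith1 (e n : ℕ) :
    (e + n + 1).choose n * n.factorial * (e + 1).factorial * (e + 1).factorial
      = (e + 1) * (n + e + 1) * e.factorial * (e + n).factorial := by
  have hc : (e + n + 1).choose n * n.factorial * (e + 1).factorial = (e + n + 1).factorial := by
    have h := Nat.choose_mul_factorial_mul_factorial (show n ≤ e + n + 1 by omega)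
    rw [show e + n + 1 - n = e + 1 from by omega] at h
    exact h
  rw [hc, Nat.factorial_succ (e + n), Nat.factorial_succ e]
  ring

/-- the dimension of `ℋ_{k,l}` is
`Z^{(d)}_{k,l} = (d-1)(k+l+d-1)(d+k-2)!(d+l-2)!/(((d-1)!)² k! l!)`. -/
theorem dim_biHarmSpace (d k l : ℕ) (hd : 2 ≤ d) :
    Module.finrank ℂ (biHarmSpace d k l) *
        ((d - 1).factorial ^ 2 * k.factorial * l.factorial) =
      (d - 1) * (k + l + d - 1) * (d + k - 2).factorial * (d + l - 2).factorial := by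
  obtain ⟨e, rfl⟩ : ∃ e, d = e + 2 := ⟨d - 2, by omega⟩
  cases k with
  | zero =>
    rw [BiHarm.biHarm_eq_W_left, BiHarm.finrank_W]
    simp only [show e + 2 + 0 - 1 = e + 1 from by omega,
      show e + 2 + l - 1 = e + l + 1 from by omega, show e + 2 - 1 = e + 1 from by omega,
      show 0 + l + (e + 2) - 1 = l + e + 1 from by omega,
      show e + 2 + 0 - 2 = e from by omega, show e + 2 + l - 2 = e + l from by omega,
      Nat.choose_zero_right, Nat.factorial_zero]
    calc (e + 1).choose 0 * (e + l + 1).choose l * ((e + 1).factorial ^ 2 * 1 * l.factorial)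
        = (e + l + 1).choose l * l.factorial * (e + 1).factorial * (e + 1).factorial := by
          rw [Nat.choose_zero_right]; ring
      _ = (e + 1) * (l + e + 1) * e.factorial * (e + l).factorial := arith1 e l
  | succ k' =>
    cases l with
    | zero =>
      rw [BiHarm.biHarm_eq_W_right, BiHarm.finrank_W]
      simp only [show e + 2 + (k' + 1) - 1 = e + k' + 2 from by omega,
        show e + 2 + 0 - 1 = e + 1 from by omega, show e + 2 - 1 = e + 1 from by omega,
        show k' + 1 + 0 + (e + 2) - 1 = k' + e + 2 from by omega,
        show e + 2 + (k' + 1) - 2 = e + k' + 1 from by omega,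
        show e + 2 + 0 - 2 = e from by omega,
        Nat.choose_zero_right, Nat.factorial_zero]
      calc (e + k' + 2).choose (k' + 1) * 1 *
            ((e + 1).factorial ^ 2 * (k' + 1).factorial * 1)
          = (e + (k' + 1) + 1).choose (k' + 1) * (k' + 1).factorial * (e + 1).factorial *
              (e + 1).factorial := by
            rw [show e + (k' + 1) + 1 = e + k' + 2 from by omega]; ring
        _ = (e + 1) * ((k' + 1) + e + 1) * e.factorial * (e + (k' + 1)).factorial :=
            arith1 e (k' + 1)
        _ = (e + 1) * (k' + e + 2) * (e + k' + 1).factorial * e.factorial := by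
            rw [show e + (k' + 1) = e + k' + 1 from by omega,
              show (k' + 1) + e + 1 = k' + e + 2 from by omega]; ring
    | succ l' =>
      have key := BiHarm.finrank_biHarm_succ (d := e + 2) (by omega) k' l'
      rw [BiHarm.finrank_W, BiHarm.finrank_W] at key
      simp only [show e + 2 + (k' + 1) - 1 = e + k' + 2 from by omega,
        show e + 2 + (l' + 1) - 1 = e + l' + 2 from by omega,
        show e + 2 + k' - 1 = e + k' + 1 from by omega,
        show e + 2 + l' - 1 = e + l' + 1 from by omega] at key
      simp only [show e + 2 - 1 = e + 1 from by omega,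
        show k' + 1 + (l' + 1) + (e + 2) - 1 = k' + l' + e + 3 from by omega,
        show e + 2 + (k' + 1) - 2 = e + k' + 1 from by omega,
        show e + 2 + (l' + 1) - 2 = e + l' + 1 from by omega]
      set F := Module.finrank ℂ (biHarmSpace (e + 2) (k' + 1) (l' + 1)) with hF
      set P := (e + 1).factorial ^ 2 * (k' + 1).factorial * (l' + 1).factorial with hP
      have hc1 : (e + k' + 2).choose (k' + 1) * (k' + 1).factorial * (e + 1).factorial
          = (e + k' + 2).factorial := by
        have h := Nat.choose_mul_factorial_mul_factorial (show k' + 1 ≤ e + k' + 2 by omega)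
        rw [show e + k' + 2 - (k' + 1) = e + 1 from by omega] at h
        exact h
      have hc2 : (e + l' + 2).choose (l' + 1) * (l' + 1).factorial * (e + 1).factorial
          = (e + l' + 2).factorial := by
        have h := Nat.choose_mul_factorial_mul_factorial (show l' + 1 ≤ e + l' + 2 by omega)
        rw [show e + l' + 2 - (l' + 1) = e + 1 from by omega] at h
        exact h
      have hc3 : (e + k' + 1).choose k' * k'.factorial * (e + 1).factorial
          = (e + k' + 1).factorial := by
        have h := Nat.choose_mul_factorial_mul_factorial (show k' ≤ e + k' + 1 by omega)
        rw [show e + k' + 1 - k' = e + 1 from by omega] at h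
        exact h
      have hc4 : (e + l' + 1).choose l' * l'.factorial * (e + 1).factorial
          = (e + l' + 1).factorial := by
        have h := Nat.choose_mul_factorial_mul_factorial (show l' ≤ e + l' + 1 by omega)
        rw [show e + l' + 1 - l' = e + 1 from by omega] at h
        exact h
      have hN : (e + k' + 1).choose k' * (e + l' + 1).choose l' * P
          = (k' + 1) * (l' + 1) * ((e + k' + 1).factorial * (e + l' + 1).factorial) := by
        calc (e + k' + 1).choose k' * (e + l' + 1).choose l' * P
            = ((e + k' + 1).choose k' * k'.factorial * (e + 1).factorial) *
                ((e + l' + 1).choose l' * l'.factorial * (e + 1).factorial) *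
                ((k' + 1) * (l' + 1)) := by
              rw [hP, Nat.factorial_succ k', Nat.factorial_succ l']; ring
          _ = (k' + 1) * (l' + 1) * ((e + k' + 1).factorial * (e + l' + 1).factorial) := by
              rw [hc3, hc4]; ring
      have h2 : (e + k' + 2).choose (k' + 1) * (e + l' + 2).choose (l' + 1) * P
          = (e + 1) * (k' + l' + e + 3) * (e + k' + 1).factorial * (e + l' + 1).factorial
            + (e + k' + 1).choose k' * (e + l' + 1).choose l' * P := by
        calc (e + k' + 2).choose (k' + 1) * (e + l' + 2).choose (l' + 1) * P
            = ((e + k' + 2).choose (k' + 1) * (k' + 1).factorial * (e + 1).factorial) *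
                ((e + l' + 2).choose (l' + 1) * (l' + 1).factorial * (e + 1).factorial) := by
              rw [hP]; ring
          _ = (e + k' + 2).factorial * (e + l' + 2).factorial := by rw [hc1, hc2]
          _ = ((e + 1) * (k' + l' + e + 3) + (k' + 1) * (l' + 1)) *
                ((e + k' + 1).factorial * (e + l' + 1).factorial) := by
              rw [Nat.factorial_succ (e + k' + 1), Nat.factorial_succ (e + l' + 1)]; ring
          _ = (e + 1) * (k' + l' + e + 3) * (e + k' + 1).factorial * (e + l' + 1).factorial
              + (e + k' + 1).choose k' * (e + l' + 1).choose l' * P := by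
              rw [hN]; ring
      have h3 := congrArg (· * P) key
      simp only [add_mul] at h3
      rw [h2] at h3
      exact Nat.add_right_cancel h3
end
end
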